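/- arXiv:2002.00409 — 6 statements merged into one kernel-verified Lean document; each statement's English description precedes it below -/
import Mathlib

section
/- A compactification K is homeomorphic to the Higson compactification of some finitary coarse space if and only if K is ℝ-soft. -/
open Set Filter Topology

universe u u₁ u₂ v w

section CoarsePreamble

variable {X : Type u}

/-- An entourage on `X` is a subset of `X × X` containing the diagonal. -/
def IsEntourage (E : Set (X × X)) : Prop := ∀ x : X, (x, x) ∈ E

/-- Composition `E ∘ F` of two entourages. -/
def entComp (E F : Set (X × X)) : Set (X × X) :=
  {p | ∃ y : X, (p.1, y) ∈ E ∧ (y, p.2) ∈ F}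

/-- Inverse `E⁻¹` of an entourage. -/
def entInv (E : Set (X × X)) : Set (X × X) := {p | (p.2, p.1) ∈ E}

/-- The `E`-ball `E[x]` centered at `x`. -/
def entBall (E : Set (X × X)) (x : X) : Set X := {y | (x, y) ∈ E}

/-- A coarse structure on `X`: a family of entourages covering `X × X`, closed under
`E ∘ F⁻¹` up to enlargement, and downward closed among entourages. -/
structure IsCoarseStructure (𝓔 : Set (Set (X × X))) : Prop where
  ent : ∀ E ∈ 𝓔, IsEntourage E
  cover : ∀ p : X × X, ∃ E ∈ 𝓔, p ∈ E
  comp_subset : ∀ E ∈ 𝓔, ∀ F ∈ 𝓔, ∃ G ∈ 𝓔, entComp E (entInv F) ⊆ G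
  downward : ∀ E F : Set (X × X), IsEntourage E → E ⊆ F → F ∈ 𝓔 → E ∈ 𝓔

/-- A set `B` is bounded in the coarse space `(X, 𝓔)` if `B ⊆ E[x]` for some `E ∈ 𝓔`, `x ∈ X`. -/
def IsBoundedSet (𝓔 : Set (Set (X × X))) (B : Set X) : Prop :=
  ∃ E ∈ 𝓔, ∃ x : X, B ⊆ entBall E x

/-- A coarse structure is finitary if the cardinalities of balls of each entourage
are uniformly finite. -/
def IsFinitaryCoarse (𝓔 : Set (Set (X × X))) : Prop :=
  ∀ E ∈ 𝓔, ∃ n : ℕ, ∀ x : X, (entBall E x).Finite ∧ (entBall E x).ncard ≤ n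

/-- `d : X → X → ℝ` is a metric. -/
structure IsMetricOn (d : X → X → ℝ) : Prop where
  refl : ∀ x, d x x = 0
  eq_of : ∀ x y, d x y = 0 → x = y
  symm : ∀ x y, d x y = d y x
  triangle : ∀ x y z, d x z ≤ d x y + d y z

/-- A coarse structure is metrizable if it is the coarse structure of some metric on `X`,
i.e. consists of all entourages of uniformly bounded `d`-diameter. -/
def IsMetrizableCoarse (𝓔 : Set (Set (X × X))) : Prop :=
  ∃ d : X → X → ℝ, IsMetricOn d ∧
    𝓔 = {E | IsEntourage E ∧ ∃ n : ℕ, ∀ p ∈ E, d p.1 p.2 ≤ (n : ℝ)}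

/-- A cellular entourage: a symmetric and transitive entourage (an equivalence relation). -/
def IsCellularEnt (E : Set (X × X)) : Prop :=
  (∀ p : X × X, p ∈ E → (p.2, p.1) ∈ E) ∧
    ∀ x y z : X, (x, y) ∈ E → (y, z) ∈ E → (x, z) ∈ E

/-- `𝓑` is a base of the coarse structure `𝓔`. -/
def IsCoarseBase (𝓔 𝓑 : Set (Set (X × X))) : Prop :=
  𝓑 ⊆ 𝓔 ∧ ∀ E ∈ 𝓔, ∃ B ∈ 𝓑, E ⊆ B

/-- A coarse structure is cellular if it has a base of cellular entourages. -/
def IsCellularCoarse (𝓔 : Set (Set (X × X))) : Prop :=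
  ∃ 𝓑 : Set (Set (X × X)), IsCoarseBase 𝓔 𝓑 ∧ ∀ B ∈ 𝓑, IsCellularEnt B

/-- A subset `D` is `𝓔`-discrete (thin). -/
def IsCoarseDiscrete (𝓔 : Set (Set (X × X))) (D : Set X) : Prop :=
  ∀ E ∈ 𝓔, ∃ B : Set X, IsBoundedSet 𝓔 B ∧ ∀ x ∈ D \ B, D ∩ entBall E x = {x}

/-- The basic entourage `E_F` determined by a set `F` of permutations of `X`. -/
def permEnt (F : Set (Equiv.Perm X)) : Set (X × X) :=
  {p | p.2 = p.1 ∨ ∃ g ∈ F, p.2 = g p.1}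

/-- The coarse structure `𝓔_G` generated by a set (group) `S` of permutations of `X`:
all entourages contained in `E_F` for some finite `F ⊆ S`. -/
def permCoarse (S : Set (Equiv.Perm X)) : Set (Set (X × X)) :=
  {E | IsEntourage E ∧ ∃ F : Finset (Equiv.Perm X),
    (F : Set (Equiv.Perm X)) ⊆ S ∧ E ⊆ permEnt (F : Set (Equiv.Perm X))}

variable {M : Type v} [MetricSpace M]

/-- A function `φ : X → M` is slowly oscillating. -/
def SlowlyOscillating (𝓔 : Set (Set (X × X))) (φ : X → M) : Prop :=
  ∀ ε : ℝ, 0 < ε → ∀ E ∈ 𝓔, ∃ B : Set X, IsBoundedSet 𝓔 B ∧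
    ∀ x : X, x ∉ B → EMetric.diam (φ '' entBall E x) < ENNReal.ofReal ε

/-- Two sets are asymptotically separated if `E[A] ∩ E[B]` is bounded for every `E ∈ 𝓔`. -/
def AsymptoticallySeparated (𝓔 : Set (Set (X × X))) (A B : Set X) : Prop :=
  ∀ E ∈ 𝓔, IsBoundedSet 𝓔 ((⋃ a ∈ A, entBall E a) ∩ ⋃ b ∈ B, entBall E b)

/-- A coarse space `(X, 𝓔)` is `M`-normal. -/
def IsCoarseNormal (𝓔 : Set (Set (X × X))) (M : Type v) [MetricSpace M] : Prop :=
  ∀ A B : Set X, A.Nonempty → B.Nonempty → Disjoint A B →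
    AsymptoticallySeparated 𝓔 A B →
    ∃ φ : X → M, SlowlyOscillating 𝓔 φ ∧
      ∃ ε : ℝ, 0 < ε ∧ ∀ a ∈ A, ∀ b ∈ B, ε ≤ dist (φ a) (φ b)

/-- `so(X,𝓔;M)`: the bounded slowly oscillating functions `X → M`. -/
def soSet (𝓔 : Set (Set (X × X))) (M : Type v) [MetricSpace M] : Set (X → M) :=
  {φ | Bornology.IsBounded (Set.range φ) ∧ SlowlyOscillating 𝓔 φ}

/-- The canonical map `δ_M : X → M^{so(X,𝓔;M)}`. -/
def deltaMap (𝓔 : Set (Set (X × X))) (M : Type v) [MetricSpace M] :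
    X → (↥(soSet 𝓔 M) → M) := fun x f => f.1 x

/-- The underlying set of the `M`-compactification: the closure of `δ_M(X)`. -/
def hCompSet (𝓔 : Set (Set (X × X))) (M : Type v) [MetricSpace M] :
    Set (↥(soSet 𝓔 M) → M) := closure (Set.range (deltaMap 𝓔 M))

/-- The `M`-compactification `h_M(X,𝓔)` of the coarse space `(X,𝓔)`. -/
abbrev HComp (𝓔 : Set (Set (X × X))) (M : Type v) [MetricSpace M] :=
  ↥(hCompSet 𝓔 M)

/-- The copy of a point `x ∈ X` inside the `M`-compactification. -/
def deltaEmb (𝓔 : Set (Set (X × X))) (M : Type v) [MetricSpace M] (x : X) :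
    HComp 𝓔 M := ⟨deltaMap 𝓔 M x, subset_closure (Set.mem_range_self x)⟩

/-- The permutation group `G_{X, h_M(X,𝓔)}` of the `M`-compactification, as a set of
permutations of `X` (`X` being identified with the set of isolated points of `h_M(X,𝓔)`
via `δ_M`): those permutations induced by homeomorphisms of `h_M(X,𝓔)` fixing all
points outside (the image of) `X`. -/
def hPermGroup (𝓔 : Set (Set (X × X))) (M : Type v) [MetricSpace M] :
    Set (Equiv.Perm X) :=
  {σ | ∃ h : HComp 𝓔 M ≃ₜ HComp 𝓔 M,
    (∀ z : HComp 𝓔 M, z ∉ Set.range (deltaEmb 𝓔 M) → h z = z) ∧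
    ∀ x : X, h (deltaEmb 𝓔 M x) = deltaEmb 𝓔 M (σ x)}

end CoarsePreamble

section TopPreamble

/-- The set of isolated points of a topological space. -/
def isolatedPoints (K : Type w) [TopologicalSpace K] : Set K :=
  {x | IsOpen ({x} : Set K)}

/-- A compactification: a compact Hausdorff space with dense set of isolated points. -/
def IsCompactification (K : Type w) [TopologicalSpace K] : Prop :=
  CompactSpace K ∧ T2Space K ∧ Dense (isolatedPoints K)

/-- The permutation group `G_{K',K}` of a compactification `K`: permutations of the
set `K'` of isolated points induced by homeomorphisms of `K` fixing `K \ K'` pointwise. -/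
def homeoPerms (K : Type w) [TopologicalSpace K] :
    Set (Equiv.Perm ↥(isolatedPoints K)) :=
  {σ | ∃ h : K ≃ₜ K, (∀ z : K, z ∉ isolatedPoints K → h z = z) ∧
    ∀ x : ↥(isolatedPoints K), h x.val = (σ x).val}

/-- The oscillation of `φ : K' → M` at a point `z ∈ K`. -/
noncomputable def oscAt {K : Type w} [TopologicalSpace K] {M : Type v} [MetricSpace M]
    (φ : ↥(isolatedPoints K) → M) (z : K) : ENNReal :=
  ⨅ (O : Set K) (_ : IsOpen O) (_ : z ∈ O),
    EMetric.diam (φ '' (Subtype.val ⁻¹' O))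

/-- A compactification `K` is `M`-soft. -/
def IsMSoft (K : Type w) [TopologicalSpace K] (M : Type v) [MetricSpace M] : Prop :=
  ∀ φ : ↥(isolatedPoints K) → M, Bornology.IsBounded (Set.range φ) →
    (∃ z : K, 0 < oscAt φ z) →
    ∃ σ ∈ homeoPerms K, ∃ ε : ℝ, 0 < ε ∧
      {x : ↥(isolatedPoints K) | ε ≤ dist (φ (σ x)) (φ x)}.Infinite

/-- A compactification `K` is soft. -/
def IsSoft (K : Type w) [TopologicalSpace K] : Prop :=
  ∀ A B : Set ↥(isolatedPoints K), Disjoint A B →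
    (closure (Subtype.val '' A) ∩ closure (Subtype.val '' B)).Nonempty →
    ∃ σ ∈ homeoPerms K, {x : ↥(isolatedPoints K) | x ∈ A ∧ σ x ∈ B}.Infinite

/-- `uc(K',K;M)`: restrictions to the set of isolated points of continuous functions `K → M`. -/
def ucSet (K : Type w) [TopologicalSpace K] (M : Type v) [MetricSpace M] :
    Set (↥(isolatedPoints K) → M) :=
  {φ | ∃ f : K → M, Continuous f ∧ ∀ x : ↥(isolatedPoints K), f x.val = φ x}

/-- `uc(X, h_M(X,𝓔); M)`: restrictions to `X` (via `δ_M`) of continuous functions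
`h_M(X,𝓔) → M`. -/
def ucHComp {X : Type u} (𝓔 : Set (Set (X × X))) (M : Type v) [MetricSpace M] :
    Set (X → M) :=
  {φ | ∃ f : HComp 𝓔 M → M, Continuous f ∧ ∀ x : X, f (deltaEmb 𝓔 M x) = φ x}

/-- The cardinal `Δ`: the smallest cardinality of a base of a cellular finitary coarse
structure on `ω` containing no infinite discrete subsets. -/
noncomputable def smallDeltaCard : Cardinal.{0} :=
  sInf {c : Cardinal.{0} | ∃ 𝓔 : Set (Set (ℕ × ℕ)), IsCoarseStructure 𝓔 ∧
    IsCellularCoarse 𝓔 ∧ IsFinitaryCoarse 𝓔 ∧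
    (∀ D : Set ℕ, IsCoarseDiscrete 𝓔 D → D.Finite) ∧
    ∃ 𝓑 : Set (Set (ℕ × ℕ)), IsCoarseBase 𝓔 𝓑 ∧ Cardinal.mk ↥𝓑 = c}

/-- The cardinal `𝔭`. -/
noncomputable def pCard : Cardinal.{0} :=
  sInf {c : Cardinal.{0} | ∃ F : Set (Set ℕ), (∀ A ∈ F, A.Infinite) ∧
    (∀ S : Finset (Set ℕ), (S : Set (Set ℕ)) ⊆ F → (⋂ A ∈ S, A).Infinite) ∧
    (∀ I : Set ℕ, I.Infinite → ∃ A ∈ F, (I \ A).Infinite) ∧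
    Cardinal.mk ↥F = c}

/-- The character `χ(x;K)` of a point. -/
noncomputable def charAt (K : Type w) [TopologicalSpace K] (x : K) : Cardinal.{w} :=
  sInf {c : Cardinal.{w} | ∃ 𝓑 : Set (Set K), (∀ U ∈ 𝓑, IsOpen U ∧ x ∈ U) ∧
    (∀ V : Set K, IsOpen V → x ∈ V → ∃ U ∈ 𝓑, U ⊆ V) ∧ Cardinal.mk ↥𝓑 = c}

/-- The character `χ(K)` of a space. -/
noncomputable def spaceChar (K : Type w) [TopologicalSpace K] : Cardinal.{w} :=
  ⨆ x : K, charAt K x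

/-- A corona: a compact Hausdorff space homeomorphic to the remainder of a
compactification of the countable discrete space `ℕ`. -/
def IsCorona (K : Type w) [TopologicalSpace K] : Prop :=
  CompactSpace K ∧ T2Space K ∧
    ∃ (C : Type w) (_ : TopologicalSpace C), IsCompactification C ∧
      (isolatedPoints C).Infinite ∧ (isolatedPoints C).Countable ∧
      Nonempty (K ≃ₜ ↥((isolatedPoints C)ᶜ))

/-- A soft corona. -/
def IsSoftCorona (K : Type w) [TopologicalSpace K] : Prop :=
  CompactSpace K ∧ T2Space K ∧
    ∃ (C : Type w) (_ : TopologicalSpace C), IsCompactification C ∧ IsSoft C ∧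
      (isolatedPoints C).Infinite ∧ (isolatedPoints C).Countable ∧
      Nonempty (K ≃ₜ ↥((isolatedPoints C)ᶜ))

/-- An `M`-soft corona. -/
def IsMSoftCorona (K : Type w) [TopologicalSpace K] (M : Type v) [MetricSpace M] : Prop :=
  CompactSpace K ∧ T2Space K ∧
    ∃ (C : Type w) (_ : TopologicalSpace C), IsCompactification C ∧ IsMSoft C M ∧
      (isolatedPoints C).Infinite ∧ (isolatedPoints C).Countable ∧
      Nonempty (K ≃ₜ ↥((isolatedPoints C)ᶜ))

end TopPreamble



section CoarseLemmas
variable {X : Type u} {𝓔 : Set (Set (X × X))} (h : IsCoarseStructure 𝓔)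

lemma entInv_entInv (E : Set (X × X)) : entInv (entInv E) = E := rfl

lemma isEntourage_inv {E : Set (X × X)} (hE : IsEntourage E) : IsEntourage (entInv E) :=
  fun x => hE x

lemma isEntourage_comp {E F : Set (X × X)} (hE : IsEntourage E) (hF : IsEntourage F) :
    IsEntourage (entComp E F) := fun x => ⟨x, hE x, hF x⟩

include h

lemma inv_mem {E : Set (X × X)} (hE : E ∈ 𝓔) : entInv E ∈ 𝓔 := by
  obtain ⟨G, hG, hsub⟩ := h.comp_subset E hE E hE
  refine h.downward _ G (isEntourage_inv (h.ent E hE)) ?_ hG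
  intro p hp
  exact hsub ⟨p.1, h.ent E hE p.1, hp⟩

lemma comp_mem {E F : Set (X × X)} (hE : E ∈ 𝓔) (hF : F ∈ 𝓔) : entComp E F ∈ 𝓔 := by
  obtain ⟨G, hG, hsub⟩ := h.comp_subset E hE (entInv F) (inv_mem h hF)
  exact h.downward _ G (isEntourage_comp (h.ent E hE) (h.ent F hF))
    (by intro p hp; exact hsub hp) hG

lemma union_mem {E F : Set (X × X)} (hE : E ∈ 𝓔) (hF : F ∈ 𝓔) : E ∪ F ∈ 𝓔 := by
  refine h.downward _ _ (fun x => Or.inl (h.ent E hE x)) ?_ (comp_mem h hE hF)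
  rintro ⟨x, y⟩ (hp | hp)
  · exact ⟨y, hp, h.ent F hF y⟩
  · exact ⟨x, h.ent E hE x, hp⟩

lemma finite_bounded [Nonempty X] {B : Set X} (hB : B.Finite) : IsBoundedSet 𝓔 B := by
  obtain ⟨x₀⟩ := ‹Nonempty X›
  suffices hs : ∃ E ∈ 𝓔, B ⊆ entBall E x₀ by
    obtain ⟨E, hE, hsub⟩ := hs
    exact ⟨E, hE, x₀, hsub⟩
  refine Set.Finite.induction_on (motive := fun B _ => ∃ E ∈ 𝓔, B ⊆ entBall E x₀) B hB ?_ ?_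
  · obtain ⟨E, hE, _⟩ := h.cover (x₀, x₀)
    exact ⟨E, hE, by simp⟩
  · intro b s _ _ ih
    obtain ⟨E, hE, hsub⟩ := ih
    obtain ⟨F, hF, hbF⟩ := h.cover (x₀, b)
    refine ⟨E ∪ F, union_mem h hE hF, ?_⟩
    rintro y (rfl | hy)
    · exact Or.inr hbF
    · exact Or.inl (hsub hy)

omit h in
lemma bounded_finite (hfin : IsFinitaryCoarse 𝓔) {B : Set X} (hB : IsBoundedSet 𝓔 B) :
    B.Finite := by
  obtain ⟨E, hE, x, hsub⟩ := hB
  obtain ⟨n, hn⟩ := hfin E hE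
  exact ((hn x).1).subset hsub

end CoarseLemmas

section HigsonBasics
variable {X : Type u} {𝓔 : Set (Set (X × X))}

lemma so_comp_perm (h : IsCoarseStructure 𝓔) {σ : Equiv.Perm X} {Eσ : Set (X × X)}
    (hEσ : Eσ ∈ 𝓔) (hgr : ∀ x : X, (x, σ x) ∈ Eσ) {f : X → ℝ} (hf : f ∈ soSet 𝓔 ℝ) :
    (f ∘ σ) ∈ soSet 𝓔 ℝ := by
  constructor
  · exact hf.1.subset (by rintro _ ⟨x, rfl⟩; exact ⟨σ x, rfl⟩)
  · intro ε hε F hF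
    obtain ⟨B, hB, hdiam⟩ := hf.2 ε hε (entComp F Eσ) (comp_mem h hF hEσ)
    refine ⟨B, hB, fun x hx => ?_⟩
    refine lt_of_le_of_lt (EMetric.diam_mono ?_) (hdiam x hx)
    rintro _ ⟨y, hy, rfl⟩
    exact ⟨σ y, ⟨y, hy, hgr y⟩, rfl⟩

open Classical in
/-- The `{0,1}`-indicator function of the singleton `{x}`, as a real valued function. -/
noncomputable def indFn {X : Type u} (x : X) : X → ℝ := fun y => if y = x then 1 else 0

lemma indFn_self (x : X) : indFn x x = 1 := by simp [indFn]

lemma indFn_ne {x y : X} (hxy : y ≠ x) : indFn x y = 0 := by simp [indFn, hxy]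

/-- The indicator function of a singleton is slowly oscillating (for finitary spaces). -/
lemma indicator_mem_soSet (h : IsCoarseStructure 𝓔) (hfin : IsFinitaryCoarse 𝓔) (x : X) :
    indFn x ∈ soSet 𝓔 ℝ := by
  have : Nonempty X := ⟨x⟩
  constructor
  · refine (Set.toFinite ({1,0} : Set ℝ)).isBounded.subset ?_
    rintro _ ⟨y, rfl⟩
    by_cases hy : y = x
    · subst hy; rw [indFn_self]; exact Or.inl rfl
    · rw [indFn_ne hy]; exact Or.inr rfl
  · intro ε hε E hE
    refine ⟨insert x (entBall (entInv E) x), ?_, fun y hy => ?_⟩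
    · refine finite_bounded h ?_
      obtain ⟨n, hn⟩ := hfin (entInv E) (inv_mem h hE)
      exact ((hn x).1).insert x
    · have hsub : indFn x '' entBall E y ⊆ {0} := by
        rintro _ ⟨w, hw, rfl⟩
        have hwx : w ≠ x := by
          rintro rfl
          exact hy (Or.inr hw)
        rw [indFn_ne hwx]; rfl
      calc EMetric.diam _ ≤ EMetric.diam ({0} : Set ℝ) := EMetric.diam_mono hsub
        _ = 0 := EMetric.diam_singleton
        _ < ENNReal.ofReal ε := ENNReal.ofReal_pos.mpr hε

lemma deltaMap_injective (h : IsCoarseStructure 𝓔) (hfin : IsFinitaryCoarse 𝓔) :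
    Function.Injective (deltaMap 𝓔 ℝ) := by
  intro x y hxy
  by_contra hne
  have h1 : indFn x x = indFn x y :=
    congrFun hxy ⟨_, indicator_mem_soSet h hfin x⟩
  rw [indFn_self x, indFn_ne (Ne.symm hne)] at h1
  exact one_ne_zero h1

lemma deltaEmb_injective (h : IsCoarseStructure 𝓔) (hfin : IsFinitaryCoarse 𝓔) :
    Function.Injective (deltaEmb 𝓔 ℝ) := fun x y hxy =>
  deltaMap_injective h hfin (congrArg Subtype.val hxy)

lemma isolatedPoints_hComp (h : IsCoarseStructure 𝓔) (hfin : IsFinitaryCoarse 𝓔) :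
    isolatedPoints (HComp 𝓔 ℝ) = Set.range (deltaEmb 𝓔 ℝ) := by
  ext p
  constructor
  · intro hp
    rw [isolatedPoints, Set.mem_setOf_eq, isOpen_induced_iff] at hp
    obtain ⟨V, hV, hVp⟩ := hp
    have hpV : p.1 ∈ V := by
      have hmem : p ∈ (Subtype.val ⁻¹' V : Set (HComp 𝓔 ℝ)) := hVp ▸ rfl
      exact hmem
    have hcl : p.1 ∈ closure (Set.range (deltaMap 𝓔 ℝ)) := p.2
    rw [mem_closure_iff] at hcl
    obtain ⟨q, hqV, x, rfl⟩ := hcl V hV hpV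
    have hmem : deltaEmb 𝓔 ℝ x ∈ (Subtype.val ⁻¹' V : Set (HComp 𝓔 ℝ)) := hqV
    rw [hVp] at hmem
    exact ⟨x, hmem.symm ▸ rfl⟩
  · rintro ⟨x, rfl⟩
    set χ : ↥(soSet 𝓔 ℝ) := ⟨_, indicator_mem_soSet h hfin x⟩ with hχ
    set U : Set (↥(soSet 𝓔 ℝ) → ℝ) := {q | 1/2 < q χ} with hU
    have hUopen : IsOpen U := isOpen_lt continuous_const (continuous_apply χ)
    rw [isolatedPoints, Set.mem_setOf_eq, isOpen_induced_iff]
    refine ⟨U, hUopen, ?_⟩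
    ext q
    simp only [Set.mem_preimage, Set.mem_singleton_iff]
    constructor
    · intro hq
      have hq1 : q.1 ∈ closure ({deltaMap 𝓔 ℝ x} : Set _) := by
        rw [mem_closure_iff]
        intro O hO hqO
        have hcl2 : q.1 ∈ closure (Set.range (deltaMap 𝓔 ℝ)) := q.2
        rw [mem_closure_iff] at hcl2
        obtain ⟨_, ⟨⟨hrO, hrU⟩, y, rfl⟩⟩ := hcl2 (O ∩ U) (hO.inter hUopen) ⟨hqO, hq⟩
        have hyx : y = x := by
          by_contra hne
          have h0 : deltaMap 𝓔 ℝ y χ = 0 := indFn_ne hne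
          rw [hU] at hrU
          simp only [Set.mem_setOf_eq, h0] at hrU
          norm_num at hrU
        subst hyx
        exact ⟨_, hrO, rfl⟩
      rw [closure_singleton, Set.mem_singleton_iff] at hq1
      exact Subtype.ext hq1
    · rintro rfl
      show (1/2 : ℝ) < deltaMap 𝓔 ℝ x χ
      have h1 : deltaMap 𝓔 ℝ x χ = 1 := indFn_self x
      rw [h1]; norm_num

end HigsonBasics
section KeyB
variable {X : Type u} {𝓔 : Set (Set (X × X))}

lemma mem_range_deltaEmb_iff {p : HComp 𝓔 ℝ} :
    p ∈ Set.range (deltaEmb 𝓔 ℝ) ↔ p.1 ∈ Set.range (deltaMap 𝓔 ℝ) := by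
  constructor
  · rintro ⟨x, rfl⟩; exact ⟨x, rfl⟩
  · rintro ⟨x, hx⟩; exact ⟨x, Subtype.ext hx⟩

/-- The self-map of the ambient product space induced by composing coordinates with `σ`. -/
noncomputable def psiMap (h : IsCoarseStructure 𝓔) {σ : Equiv.Perm X} {Eσ : Set (X × X)}
    (hEσ : Eσ ∈ 𝓔) (hgr : ∀ x : X, (x, σ x) ∈ Eσ) :
    (↥(soSet 𝓔 ℝ) → ℝ) → (↥(soSet 𝓔 ℝ) → ℝ) :=
  fun p f => p ⟨f.1 ∘ σ, so_comp_perm h hEσ hgr f.2⟩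

lemma psiMap_continuous (h : IsCoarseStructure 𝓔) {σ : Equiv.Perm X} {Eσ : Set (X × X)}
    (hEσ : Eσ ∈ 𝓔) (hgr : ∀ x : X, (x, σ x) ∈ Eσ) : Continuous (psiMap h hEσ hgr) :=
  continuous_pi fun _ => continuous_apply _

lemma psiMap_delta (h : IsCoarseStructure 𝓔) {σ : Equiv.Perm X} {Eσ : Set (X × X)}
    (hEσ : Eσ ∈ 𝓔) (hgr : ∀ x : X, (x, σ x) ∈ Eσ) (x : X) :
    psiMap h hEσ hgr (deltaMap 𝓔 ℝ x) = deltaMap 𝓔 ℝ (σ x) := rfl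

lemma psiMap_maps (h : IsCoarseStructure 𝓔) {σ : Equiv.Perm X} {Eσ : Set (X × X)}
    (hEσ : Eσ ∈ 𝓔) (hgr : ∀ x : X, (x, σ x) ∈ Eσ) {p : ↥(soSet 𝓔 ℝ) → ℝ}
    (hp : p ∈ hCompSet 𝓔 ℝ) : psiMap h hEσ hgr p ∈ hCompSet 𝓔 ℝ := by
  have himg := image_closure_subset_closure_image
    (s := Set.range (deltaMap 𝓔 ℝ)) (psiMap_continuous h hEσ hgr)
  have hmem := himg ⟨p, hp, rfl⟩
  refine closure_mono ?_ hmem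
  rintro _ ⟨_, ⟨x, rfl⟩, rfl⟩
  exact ⟨σ x, (psiMap_delta h hEσ hgr x).symm⟩

lemma inv_graph (h : IsCoarseStructure 𝓔) {σ : Equiv.Perm X} {Eσ : Set (X × X)}
    (hgr : ∀ x : X, (x, σ x) ∈ Eσ) : ∀ x : X, (x, σ.symm x) ∈ entInv Eσ := by
  intro x
  show (σ.symm x, x) ∈ Eσ
  have := hgr (σ.symm x)
  rwa [Equiv.apply_symm_apply] at this

lemma psiMap_fix (h : IsCoarseStructure 𝓔) (hfin : IsFinitaryCoarse 𝓔)
    {σ : Equiv.Perm X} {Eσ : Set (X × X)}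
    (hEσ : Eσ ∈ 𝓔) (hgr : ∀ x : X, (x, σ x) ∈ Eσ) {p : HComp 𝓔 ℝ}
    (hp : p ∉ Set.range (deltaEmb 𝓔 ℝ)) : psiMap h hEσ hgr p.1 = p.1 := by
  funext f
  set g : (↥(soSet 𝓔 ℝ) → ℝ) → ℝ :=
    fun q => q ⟨f.1 ∘ σ, so_comp_perm h hEσ hgr f.2⟩ - q f with hg
  have hgcont : Continuous g := ((continuous_apply _).sub (continuous_apply _))
  have key : ∀ ε : ℝ, 0 < ε → |g p.1| ≤ ε := by
    intro ε hε
    obtain ⟨B, hB, hdiam⟩ := f.2.2 ε hε Eσ hEσ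
    have hBfin : B.Finite := bounded_finite hfin hB
    -- p.1 lies in the closure of δ(X \ B)
    have hp1 : p.1 ∈ closure (deltaMap 𝓔 ℝ '' Bᶜ) := by
      have hcl : p.1 ∈ closure (Set.range (deltaMap 𝓔 ℝ)) := p.2
      have hsplit : Set.range (deltaMap 𝓔 ℝ) =
          deltaMap 𝓔 ℝ '' B ∪ deltaMap 𝓔 ℝ '' Bᶜ := by
        rw [← Set.image_union, Set.union_compl_self, Set.image_univ]
      rw [hsplit, closure_union, (hBfin.image _).isClosed.closure_eq] at hcl
      rcases hcl with hcl | hcl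
      · exact absurd (mem_range_deltaEmb_iff.mpr (Set.image_subset_range _ _ hcl)) hp
      · exact hcl
    have hC : deltaMap 𝓔 ℝ '' Bᶜ ⊆ {q | |g q| ≤ ε} := by
      rintro _ ⟨x, hx, rfl⟩
      have h1 : f.1 (σ x) ∈ f.1 '' entBall Eσ x := ⟨σ x, hgr x, rfl⟩
      have h2 : f.1 x ∈ f.1 '' entBall Eσ x := ⟨x, h.ent Eσ hEσ x, rfl⟩
      have hle : edist (f.1 (σ x)) (f.1 x) ≤ EMetric.diam (f.1 '' entBall Eσ x) :=
        EMetric.edist_le_diam_of_mem h1 h2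
      have hlt : edist (f.1 (σ x)) (f.1 x) < ENNReal.ofReal ε := lt_of_le_of_lt hle (hdiam x hx)
      rw [edist_dist] at hlt
      have hdlt : dist (f.1 (σ x)) (f.1 x) < ε :=
        (ENNReal.ofReal_lt_ofReal_iff hε).mp hlt
      show |deltaMap 𝓔 ℝ x ⟨f.1 ∘ σ, _⟩ - deltaMap 𝓔 ℝ x f| ≤ ε
      have : deltaMap 𝓔 ℝ x ⟨f.1 ∘ σ, so_comp_perm h hEσ hgr f.2⟩ = f.1 (σ x) := rfl
      rw [this]
      exact le_of_lt (by rwa [Real.dist_eq] at hdlt)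
    have hclosed : IsClosed {q : (↥(soSet 𝓔 ℝ) → ℝ) | |g q| ≤ ε} :=
      isClosed_le (hgcont.abs) continuous_const
    have := (hclosed.closure_subset_iff.mpr hC) hp1
    exact this
  have : |g p.1| = 0 := by
    by_contra hne
    have hpos : 0 < |g p.1| := lt_of_le_of_ne (abs_nonneg _) (Ne.symm hne)
    have := key (|g p.1| / 2) (by linarith)
    linarith
  have := abs_eq_zero.mp this
  rw [hg] at this
  exact sub_eq_zero.mp this

/-- Any permutation whose graph is contained in an entourage belongs to `hPermGroup`. -/
lemma graph_mem_hPermGroup (h : IsCoarseStructure 𝓔) (hfin : IsFinitaryCoarse 𝓔)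
    {σ : Equiv.Perm X} {Eσ : Set (X × X)}
    (hEσ : Eσ ∈ 𝓔) (hgr : ∀ x : X, (x, σ x) ∈ Eσ) : σ ∈ hPermGroup 𝓔 ℝ := by
  have hEσ' : entInv Eσ ∈ 𝓔 := inv_mem h hEσ
  have hgr' := inv_graph h (σ := σ) (Eσ := Eσ) hgr
  have hli : ∀ p : HComp 𝓔 ℝ,
      psiMap h hEσ' hgr' (psiMap h hEσ hgr p.1) = p.1 := by
    intro p
    funext f
    have harg : (⟨(f.1 ∘ ⇑σ.symm) ∘ ⇑σ,
        so_comp_perm h hEσ hgr (so_comp_perm h hEσ' hgr' f.2)⟩ : ↥(soSet 𝓔 ℝ)) = f := by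
      refine Subtype.ext (funext fun x => ?_)
      show f.1 (σ.symm (σ x)) = f.1 x
      rw [Equiv.symm_apply_apply]
    exact congrArg p.1 harg
  have hri : ∀ p : HComp 𝓔 ℝ,
      psiMap h hEσ hgr (psiMap h hEσ' hgr' p.1) = p.1 := by
    intro p
    funext f
    have harg : (⟨(f.1 ∘ ⇑σ) ∘ ⇑σ.symm,
        so_comp_perm h hEσ' hgr' (so_comp_perm h hEσ hgr f.2)⟩ : ↥(soSet 𝓔 ℝ)) = f := by
      refine Subtype.ext (funext fun x => ?_)
      show f.1 (σ (σ.symm x)) = f.1 x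
      rw [Equiv.apply_symm_apply]
    exact congrArg p.1 harg
  refine ⟨{ toFun := fun p => ⟨psiMap h hEσ hgr p.1, psiMap_maps h hEσ hgr p.2⟩
            invFun := fun p => ⟨psiMap h hEσ' hgr' p.1, psiMap_maps h hEσ' hgr' p.2⟩
            left_inv := fun p => Subtype.ext (by
              show psiMap h hEσ' hgr' (psiMap h hEσ hgr p.1) = p.1
              exact hli p)
            right_inv := fun p => Subtype.ext (by
              show psiMap h hEσ hgr (psiMap h hEσ' hgr' p.1) = p.1
              exact hri p)
            continuous_toFun := Continuous.subtype_mk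
              ((psiMap_continuous h hEσ hgr).comp continuous_subtype_val) _
            continuous_invFun := Continuous.subtype_mk
              ((psiMap_continuous h hEσ' hgr').comp continuous_subtype_val) _ }, ?_, ?_⟩
  · intro z hz
    exact Subtype.ext (psiMap_fix h hfin hEσ hgr hz)
  · intro x
    exact Subtype.ext (psiMap_delta h hEσ hgr x)

end KeyB
section KeyC
variable {X : Type u} {𝓔 : Set (Set (X × X))}

lemma osc_zero_of_so (h : IsCoarseStructure 𝓔) (hfin : IsFinitaryCoarse 𝓔)
    {φ : ↥(isolatedPoints (HComp 𝓔 ℝ)) → ℝ} {ψ : X → ℝ} (hψ : ψ ∈ soSet 𝓔 ℝ)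
    (hcomm : ∀ (w : ↥(isolatedPoints (HComp 𝓔 ℝ))) (x : X),
      w.val = deltaEmb 𝓔 ℝ x → φ w = ψ x) (z : HComp 𝓔 ℝ) : oscAt φ z = 0 := by
  set π : HComp 𝓔 ℝ → ℝ := fun p => p.1 ⟨ψ, hψ⟩ with hπ
  have hπcont : Continuous π := (continuous_apply _).comp continuous_subtype_val
  have key : ∀ ε : ℝ, 0 < ε → oscAt φ z ≤ ENNReal.ofReal (2 * ε) := by
    intro ε hε
    set O : Set (HComp 𝓔 ℝ) := π ⁻¹' (Metric.ball (π z) ε) with hO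
    have hOopen : IsOpen O := hπcont.isOpen_preimage _ Metric.isOpen_ball
    have hzO : z ∈ O := by
      simp only [hO, Set.mem_preimage, Metric.mem_ball, dist_self]; exact hε
    have hsub : φ '' (Subtype.val ⁻¹' O) ⊆ Metric.ball (π z) ε := by
      rintro _ ⟨w, hw, rfl⟩
      have hwiso : w.val ∈ Set.range (deltaEmb 𝓔 ℝ) := by
        rw [← isolatedPoints_hComp h hfin]; exact w.2
      obtain ⟨x, hx⟩ := hwiso
      rw [hcomm w x hx.symm]
      have : π w.val = ψ x := by rw [← hx]; rfl
      rw [← this]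
      exact hw
    have hdiam : EMetric.diam (φ '' (Subtype.val ⁻¹' O)) ≤ ENNReal.ofReal (2 * ε) := by
      refine EMetric.diam_le fun u hu v hv => ?_
      have h1 := hsub hu
      have h2 := hsub hv
      rw [Metric.mem_ball] at h1 h2
      rw [edist_dist]
      refine ENNReal.ofReal_le_ofReal ?_
      calc dist u v ≤ dist u (π z) + dist (π z) v := dist_triangle _ _ _
        _ ≤ ε + ε := by
            rw [dist_comm (π z) v]; exact add_le_add (le_of_lt h1) (le_of_lt h2)
        _ = 2 * ε := by ring
    calc oscAt φ z ≤ EMetric.diam (φ '' (Subtype.val ⁻¹' O)) := by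
          refine iInf_le_of_le O ?_
          refine iInf_le_of_le hOopen ?_
          exact iInf_le _ hzO
      _ ≤ ENNReal.ofReal (2 * ε) := hdiam
  by_contra hne
  have hpos : 0 < oscAt φ z := pos_iff_ne_zero.mpr hne
  obtain ⟨c, hc0, hcd⟩ := exists_between hpos
  have hct : c ≠ ⊤ := by
    intro hc
    rw [hc] at hcd
    exact absurd hcd (by simp)
  have hctr : 0 < c.toReal := ENNReal.toReal_pos (ne_of_gt hc0) hct
  have := key (c.toReal / 2) (by linarith)
  rw [show 2 * (c.toReal / 2) = c.toReal by ring, ENNReal.ofReal_toReal hct] at this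
  exact absurd (lt_of_lt_of_le hcd this) (lt_irrefl _)

lemma step_pair (h : IsCoarseStructure 𝓔) (hfin : IsFinitaryCoarse 𝓔) [Nonempty X]
    {ψ : X → ℝ} {ε : ℝ} (hε : 0 < ε) {E : Set (X × X)} (hE : E ∈ 𝓔)
    (hbad : ∀ B : Set X, IsBoundedSet 𝓔 B →
      ∃ x, x ∉ B ∧ ¬ EMetric.diam (ψ '' entBall E x) < ENNReal.ofReal ε) :
    ∀ B : Set X, B.Finite → ∃ p : X × X, p.1 ∉ B ∧ p.2 ∉ B ∧ p.1 ≠ p.2 ∧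
      ε / 2 ≤ dist (ψ p.1) (ψ p.2) ∧ (p.1, p.2) ∈ entComp (entInv E) E := by
  intro B hB
  set B' : Set X := B ∪ ⋃ y ∈ B, entBall (entInv E) y with hB'
  have hB'fin : B'.Finite := by
    refine hB.union (Set.Finite.biUnion hB fun y _ => ?_)
    obtain ⟨n, hn⟩ := hfin (entInv E) (inv_mem h hE)
    exact (hn y).1
  obtain ⟨x, hxB', hxdiam⟩ := hbad B' (finite_bounded h hB'fin)
  rw [not_lt] at hxdiam
  have hlt : ENNReal.ofReal (ε / 2) < EMetric.diam (ψ '' entBall E x) :=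
    lt_of_lt_of_le ((ENNReal.ofReal_lt_ofReal_iff hε).mpr (by linarith)) hxdiam
  have : ¬ EMetric.diam (ψ '' entBall E x) ≤ ENNReal.ofReal (ε / 2) := not_le.mpr hlt
  have hex : ∃ u ∈ ψ '' entBall E x, ∃ v ∈ ψ '' entBall E x,
      ¬ edist u v ≤ ENNReal.ofReal (ε / 2) := by
    by_contra hcon
    push_neg at hcon
    exact this (EMetric.diam_le hcon)
  obtain ⟨_, ⟨a, ha, rfl⟩, _, ⟨b, hb, rfl⟩, hedist⟩ := hex
  rw [not_le, edist_dist] at hedist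
  have hdist : ε / 2 < dist (ψ a) (ψ b) :=
    (ENNReal.ofReal_lt_ofReal_iff_of_nonneg (by linarith)).mp hedist
  have hanB : ∀ w : X, w ∈ entBall E x → w ∉ B := by
    intro w hw hwB
    refine hxB' (Or.inr ?_)
    exact Set.mem_biUnion hwB hw
  have hab : a ≠ b := by
    intro hh; rw [hh] at hdist
    simp only [dist_self] at hdist; linarith
  exact ⟨(a, b), hanB a ha, hanB b hb, hab, le_of_lt hdist, ⟨x, ha, hb⟩⟩

end KeyC
section Pairs
variable {X : Type u}

lemma exists_pair_seq [Nonempty X] {P : X × X → Prop}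
    (hstep : ∀ B : Set X, B.Finite → ∃ p : X × X, p.1 ∉ B ∧ p.2 ∉ B ∧ p.1 ≠ p.2 ∧ P p) :
    ∃ a b : ℕ → X, Function.Injective a ∧ Function.Injective b ∧
      (∀ m n : ℕ, a m ≠ b n) ∧ ∀ n : ℕ, P (a n, b n) := by
  haveI := Classical.decEq X
  choose pfn h1 h2 h3 h4 using hstep
  set step : Finset X → X × X := fun s => pfn ↑s s.finite_toSet with hstepdef
  obtain ⟨Bf, hBf0, hBfS⟩ : ∃ Bf : ℕ → Finset X, Bf 0 = ∅ ∧
      ∀ n, Bf (n + 1) = Bf n ∪ {(step (Bf n)).1, (step (Bf n)).2} :=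
    ⟨fun n => Nat.rec ∅ (fun _ s => s ∪ {(step s).1, (step s).2}) n, rfl, fun _ => rfl⟩
  set q : ℕ → X × X := fun n => step (Bf n) with hq
  have hmem : ∀ n, (q n).1 ∈ Bf (n + 1) ∧ (q n).2 ∈ Bf (n + 1) := by
    intro n
    rw [hBfS]
    constructor
    · exact Finset.mem_union_right _ (Finset.mem_insert_self _ _)
    · exact Finset.mem_union_right _ (Finset.mem_insert_of_mem (Finset.mem_singleton_self _))
  have hmono : Monotone Bf := by
    refine monotone_nat_of_le_succ fun n => ?_
    rw [hBfS]
    exact Finset.subset_union_left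
  have hnot1 : ∀ n, (q n).1 ∉ Bf n := fun n => h1 _ _
  have hnot2 : ∀ n, (q n).2 ∉ Bf n := fun n => h2 _ _
  have hne : ∀ n, (q n).1 ≠ (q n).2 := fun n => h3 _ _
  have hP : ∀ n, P (q n) := fun n => h4 _ _
  refine ⟨fun n => (q n).1, fun n => (q n).2, ?_, ?_, ?_, ?_⟩
  · intro m n hmn
    have hmn' : (q m).1 = (q n).1 := hmn
    by_contra hne'
    rcases lt_or_gt_of_ne hne' with hlt | hlt
    · exact hnot1 n (hmono (Nat.succ_le_of_lt hlt) (hmn' ▸ (hmem m).1))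
    · exact hnot1 m (hmono (Nat.succ_le_of_lt hlt) (hmn' ▸ (hmem n).1))
  · intro m n hmn
    have hmn' : (q m).2 = (q n).2 := hmn
    by_contra hne'
    rcases lt_or_gt_of_ne hne' with hlt | hlt
    · exact hnot2 n (hmono (Nat.succ_le_of_lt hlt) (hmn' ▸ (hmem m).2))
    · exact hnot2 m (hmono (Nat.succ_le_of_lt hlt) (hmn' ▸ (hmem n).2))
  · intro m n
    rcases lt_trichotomy m n with hlt | heq | hlt
    · intro hcon
      have hcon' : (q m).1 = (q n).2 := hcon
      exact hnot2 n (hmono (Nat.succ_le_of_lt hlt) (hcon' ▸ (hmem m).1))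
    · subst heq; exact hne m
    · intro hcon
      have hcon' : (q n).2 = (q m).1 := hcon.symm
      exact hnot1 m (hmono (Nat.succ_le_of_lt hlt) (hcon' ▸ (hmem n).2))
  · intro n
    have := hP n
    rwa [← Prod.mk.eta (p := q n)] at this

lemma exists_involution {a b : ℕ → X} (ha : Function.Injective a)
    (hb : Function.Injective b) (hab : ∀ m n : ℕ, a m ≠ b n) :
    ∃ σ : Equiv.Perm X, (∀ n, σ (a n) = b n) ∧ (∀ n, σ (b n) = a n) ∧
      ∀ x : X, (∀ n, x ≠ a n) → (∀ n, x ≠ b n) → σ x = x := by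
  classical
  set t : X → X := fun x =>
    if hx : ∃ n, x = a n then b (Classical.choose hx)
    else if hx2 : ∃ n, x = b n then a (Classical.choose hx2) else x with ht
  have hta : ∀ n, t (a n) = b n := by
    intro n
    have hx : ∃ k, a n = a k := ⟨n, rfl⟩
    rw [ht]
    simp only [dif_pos hx]
    rw [ha (Classical.choose_spec hx).symm]
  have htb : ∀ n, t (b n) = a n := by
    intro n
    have hx : ¬ ∃ k, b n = a k := by
      rintro ⟨k, hk⟩
      exact hab k n hk.symm
    have hx2 : ∃ k, b n = b k := ⟨n, rfl⟩
    rw [ht]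
    simp only [dif_neg hx, dif_pos hx2]
    rw [hb (Classical.choose_spec hx2).symm]
  have htid : ∀ x : X, (∀ n, x ≠ a n) → (∀ n, x ≠ b n) → t x = x := by
    intro x hxa hxb
    have hx : ¬ ∃ n, x = a n := by rintro ⟨n, hn⟩; exact hxa n hn
    have hx2 : ¬ ∃ n, x = b n := by rintro ⟨n, hn⟩; exact hxb n hn
    rw [ht]
    simp only [dif_neg hx, dif_neg hx2]
  have hinv : Function.Involutive t := by
    intro x
    by_cases hx : ∃ n, x = a n
    · obtain ⟨n, rfl⟩ := hx
      rw [hta, htb]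
    · by_cases hx2 : ∃ n, x = b n
      · obtain ⟨n, rfl⟩ := hx2
        rw [htb, hta]
      · have hid := htid x (fun n hn => hx ⟨n, hn⟩) (fun n hn => hx2 ⟨n, hn⟩)
        rw [hid, hid]
  exact ⟨hinv.toPerm t, hta, htb, htid⟩

end Pairs

section MSoftHComp
variable {X : Type u} {𝓔 : Set (Set (X × X))}

lemma msoft_hcomp (h : IsCoarseStructure 𝓔) (hfin : IsFinitaryCoarse 𝓔) :
    IsMSoft (HComp 𝓔 ℝ) ℝ := by
  rintro φ hbd ⟨z, hz⟩
  have hXne : Nonempty X := by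
    by_contra hX
    rw [not_nonempty_iff] at hX
    have hrange : Set.range (deltaMap 𝓔 ℝ) = ∅ := Set.range_eq_empty _
    have hz2 : z.val ∈ closure (Set.range (deltaMap 𝓔 ℝ)) := z.2
    rw [hrange, closure_empty] at hz2
    exact hz2
  have hiso := isolatedPoints_hComp h hfin
  set em : X → ↥(isolatedPoints (HComp 𝓔 ℝ)) :=
    fun x => ⟨deltaEmb 𝓔 ℝ x, by rw [hiso]; exact Set.mem_range_self x⟩ with hem
  have hem_inj : Function.Injective em := fun x y hxy =>
    deltaEmb_injective h hfin (congrArg Subtype.val hxy)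
  have hem_surj : Function.Surjective em := by
    intro w
    have hw : w.val ∈ Set.range (deltaEmb 𝓔 ℝ) := by rw [← hiso]; exact w.2
    obtain ⟨x, hx⟩ := hw
    exact ⟨x, Subtype.ext hx⟩
  set ψ : X → ℝ := fun x => φ (em x) with hψ
  have hψbd : Bornology.IsBounded (Set.range ψ) :=
    hbd.subset (by rintro _ ⟨x, rfl⟩; exact ⟨em x, rfl⟩)
  have hcomm : ∀ (w : ↥(isolatedPoints (HComp 𝓔 ℝ))) (x : X),
      w.val = deltaEmb 𝓔 ℝ x → φ w = ψ x := by
    intro w x hwx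
    have hwem : w = em x := Subtype.ext hwx
    rw [hwem]
  have hnso : ¬ SlowlyOscillating 𝓔 ψ := by
    intro hso
    have hzero := osc_zero_of_so h hfin (φ := φ) (ψ := ψ) ⟨hψbd, hso⟩ hcomm z
    rw [hzero] at hz; exact lt_irrefl _ hz
  rw [SlowlyOscillating] at hnso
  push_neg at hnso
  obtain ⟨ε, hε, E, hE, hbad⟩ := hnso
  have hbad' : ∀ B : Set X, IsBoundedSet 𝓔 B →
      ∃ x, x ∉ B ∧ ¬ EMetric.diam (ψ '' entBall E x) < ENNReal.ofReal ε := by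
    intro B hB
    obtain ⟨x, hx1, hx2⟩ := hbad B hB
    exact ⟨x, hx1, not_lt.mpr hx2⟩
  obtain ⟨a, b, ha_inj, hb_inj, hab_ne, hPn⟩ :=
    exists_pair_seq (P := fun p => ε / 2 ≤ dist (ψ p.1) (ψ p.2) ∧
      (p.1, p.2) ∈ entComp (entInv E) E)
      (step_pair h hfin hε hE hbad')
  obtain ⟨σ, hσa, hσb, hσid⟩ := exists_involution ha_inj hb_inj hab_ne
  set G : Set (X × X) := entComp (entInv E) E ∪ entInv (entComp (entInv E) E) with hGdef
  have hGent : IsEntourage (entComp (entInv E) E) :=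
    isEntourage_comp (isEntourage_inv (h.ent E hE)) (h.ent E hE)
  have hG : G ∈ 𝓔 := union_mem h (comp_mem h (inv_mem h hE) hE)
    (inv_mem h (comp_mem h (inv_mem h hE) hE))
  have hgr : ∀ x : X, (x, σ x) ∈ G := by
    intro x
    by_cases hx : ∃ n, x = a n
    · obtain ⟨n, rfl⟩ := hx
      rw [hσa]
      exact Or.inl (hPn n).2
    · by_cases hx2 : ∃ n, x = b n
      · obtain ⟨n, rfl⟩ := hx2
        rw [hσb]
        exact Or.inr (hPn n).2
      · rw [hσid x (fun n hn => hx ⟨n, hn⟩) (fun n hn => hx2 ⟨n, hn⟩)]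
        exact Or.inl (hGent x)
  obtain ⟨hh, hhfix, hhδ⟩ := graph_mem_hPermGroup h hfin hG hgr
  set emE : X ≃ ↥(isolatedPoints (HComp 𝓔 ℝ)) :=
    Equiv.ofBijective em ⟨hem_inj, hem_surj⟩ with hemE
  set σ' : Equiv.Perm ↥(isolatedPoints (HComp 𝓔 ℝ)) :=
    emE.symm.trans (σ.trans emE) with hσ'
  have hσ'val : ∀ x : X, σ' (em x) = em (σ x) := by
    intro x
    have h1 : emE.symm (em x) = x := emE.symm_apply_apply x
    simp only [hσ', Equiv.trans_apply, h1]
    rfl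
  refine ⟨σ', ⟨hh, ?_, ?_⟩, ε / 2, by linarith, ?_⟩
  · intro w hw
    refine hhfix w ?_
    rw [← hiso]
    exact hw
  · intro w
    obtain ⟨x, rfl⟩ := hem_surj w
    have h1 : (em x).val = deltaEmb 𝓔 ℝ x := rfl
    rw [h1, hhδ x, hσ'val x]
  · refine Set.infinite_of_injective_forall_mem
      (f := fun n : ℕ => em (a n)) (hem_inj.comp ha_inj) ?_
    intro n
    show ε / 2 ≤ dist (φ (σ' (em (a n)))) (φ (em (a n)))
    rw [hσ'val, hσa]
    have h1 : φ (em (b n)) = ψ (b n) := rfl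
    have h2 : φ (em (a n)) = ψ (a n) := rfl
    rw [h1, h2, dist_comm]
    exact (hPn n).1

end MSoftHComp
section Transfer
variable {K : Type u₁} {L : Type u₂} [TopologicalSpace K] [TopologicalSpace L]

lemma isolated_iff_homeo (e : K ≃ₜ L) (x : K) :
    x ∈ isolatedPoints K ↔ e x ∈ isolatedPoints L := by
  show IsOpen ({x} : Set K) ↔ IsOpen ({e x} : Set L)
  rw [← Set.image_singleton, Homeomorph.isOpen_image]

lemma msoft_transfer (e : K ≃ₜ L) (hL : IsMSoft L ℝ) : IsMSoft K ℝ := by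
  set ι : ↥(isolatedPoints K) ≃ ↥(isolatedPoints L) :=
    e.toEquiv.subtypeEquiv (isolated_iff_homeo e) with hι
  have hιval : ∀ x : ↥(isolatedPoints K), (ι x).val = e x.val := fun x => rfl
  have hιsymmval : ∀ y : ↥(isolatedPoints L), (ι.symm y).val = e.symm y.val := fun y => rfl
  rintro φ hbd ⟨z, hz⟩
  set φ' : ↥(isolatedPoints L) → ℝ := φ ∘ ι.symm with hφ'
  have hφ'bd : Bornology.IsBounded (Set.range φ') :=
    hbd.subset (by rintro _ ⟨y, rfl⟩; exact ⟨ι.symm y, rfl⟩)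
  have hosc : oscAt φ z ≤ oscAt φ' (e z) := by
    refine le_iInf fun O' => le_iInf fun hO' => le_iInf fun hz' => ?_
    have himg : φ '' (Subtype.val ⁻¹' (e ⁻¹' O')) = φ' '' (Subtype.val ⁻¹' O') := by
      ext u
      constructor
      · rintro ⟨w, hw, rfl⟩
        refine ⟨ι w, ?_, ?_⟩
        · show (ι w).val ∈ O'
          rw [hιval]; exact hw
        · show φ (ι.symm (ι w)) = φ w
          rw [Equiv.symm_apply_apply]
      · rintro ⟨w, hw, rfl⟩
        refine ⟨ι.symm w, ?_, rfl⟩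
        show e ((ι.symm w).val) ∈ O'
        rw [hιsymmval, Homeomorph.apply_symm_apply]
        exact hw
    calc oscAt φ z ≤ EMetric.diam (φ '' (Subtype.val ⁻¹' (e ⁻¹' O'))) := by
          refine iInf_le_of_le (e ⁻¹' O') ?_
          refine iInf_le_of_le (hO'.preimage e.continuous) ?_
          exact iInf_le _ (by simpa using hz')
      _ = EMetric.diam (φ' '' (Subtype.val ⁻¹' O')) := by rw [himg]
  obtain ⟨σ', ⟨h', hfix', hval'⟩, ε, hε, hinf⟩ := hL φ' hφ'bd ⟨e z, lt_of_lt_of_le hz hosc⟩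
  set σ : Equiv.Perm ↥(isolatedPoints K) := (ι.trans σ').trans ι.symm with hσ
  have hσval : ∀ x : ↥(isolatedPoints K), σ x = ι.symm (σ' (ι x)) := fun x => rfl
  refine ⟨σ, ⟨(e.trans h').trans e.symm, ?_, ?_⟩, ε, hε, ?_⟩
  · intro w hw
    have hw' : e w ∉ isolatedPoints L := fun hc => hw ((isolated_iff_homeo e w).mpr hc)
    show e.symm (h' (e w)) = w
    rw [hfix' (e w) hw', Homeomorph.symm_apply_apply]
  · intro x
    show e.symm (h' (e x.val)) = (σ x).val
    rw [← hιval, hval' (ι x), hσval, hιsymmval]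
  · have hsubset : (fun x : ↥(isolatedPoints K) => ι x) ⁻¹'
        {y : ↥(isolatedPoints L) | ε ≤ dist (φ' (σ' y)) (φ' y)} ⊆
        {x : ↥(isolatedPoints K) | ε ≤ dist (φ (σ x)) (φ x)} := by
      intro x hx
      simp only [Set.mem_preimage, Set.mem_setOf_eq] at hx ⊢
      have h1 : φ (σ x) = φ' (σ' (ι x)) := by rw [hσval]; rfl
      have h2 : φ x = φ' (ι x) := by
        show φ x = φ (ι.symm (ι x))
        rw [Equiv.symm_apply_apply]
      rw [h1, h2]
      exact hx
    refine Set.Infinite.mono hsubset ?_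
    refine Set.Infinite.preimage hinf ?_
    intro y _
    exact ⟨ι.symm y, by simp⟩

end Transfer
section PermCoarse
variable {K : Type u₁} [TopologicalSpace K]

lemma homeoPerms_comp {σ τ : Equiv.Perm ↥(isolatedPoints K)}
    (hσ : σ ∈ homeoPerms K) (hτ : τ ∈ homeoPerms K) : σ.trans τ ∈ homeoPerms K := by
  obtain ⟨hs, hs1, hs2⟩ := hσ
  obtain ⟨ht, ht1, ht2⟩ := hτ
  refine ⟨hs.trans ht, ?_, ?_⟩
  · intro z hz
    show ht (hs z) = z
    rw [hs1 z hz, ht1 z hz]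
  · intro x
    show ht (hs x.val) = (τ (σ x)).val
    rw [hs2 x, ht2 (σ x)]

lemma homeoPerms_inv {σ : Equiv.Perm ↥(isolatedPoints K)}
    (hσ : σ ∈ homeoPerms K) : σ⁻¹ ∈ homeoPerms K := by
  obtain ⟨hs, hs1, hs2⟩ := hσ
  refine ⟨hs.symm, ?_, ?_⟩
  · intro z hz
    have h1 := hs1 z hz
    conv_lhs => rw [← h1]
    exact hs.symm_apply_apply z
  · intro x
    have h1 := hs2 (σ⁻¹ x)
    rw [show σ (σ⁻¹ x) = x from σ.apply_symm_apply x] at h1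
    rw [← h1, Homeomorph.symm_apply_apply]

/-- Continuity of the swap of two isolated points. -/
lemma continuous_swap_isolated [T2Space K] [DecidableEq K] (a b : ↥(isolatedPoints K)) :
    Continuous (fun z : K => Equiv.swap a.val b.val z) := by
  rw [continuous_iff_continuousAt]
  intro w
  by_cases hw : w = a.val ∨ w = b.val
  · have hwopen : IsOpen ({w} : Set K) := by
      rcases hw with rfl | rfl
      exacts [a.2, b.2]
    have hn : 𝓝 w = pure w := le_antisymm
      (Filter.le_pure_iff.mpr (hwopen.mem_nhds rfl)) (pure_le_nhds w)
    rw [ContinuousAt, hn]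
    exact tendsto_pure_nhds _ w
  · push_neg at hw
    have hcl : IsClosed ({a.val, b.val} : Set K) := (Set.toFinite _).isClosed
    have hmem : ({a.val, b.val} : Set K)ᶜ ∈ 𝓝 w := by
      refine hcl.isOpen_compl.mem_nhds ?_
      rintro (hh | hh)
      · exact hw.1 hh
      · exact hw.2 hh
    have heq : (fun z : K => Equiv.swap a.val b.val z) =ᶠ[𝓝 w] id := by
      filter_upwards [hmem] with z hz
      have hz' : z ≠ a.val ∧ z ≠ b.val := by
        constructor
        · intro hc; exact hz (Or.inl hc)
        · intro hc; exact hz (Or.inr hc)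
      show Equiv.swap a.val b.val z = z
      exact Equiv.swap_apply_of_ne_of_ne hz'.1 hz'.2
    exact (continuousAt_id.congr heq.symm)

lemma swap_mem_homeoPerms [T2Space K] [DecidableEq ↥(isolatedPoints K)] (x y : ↥(isolatedPoints K)) :
    Equiv.swap x y ∈ homeoPerms K := by
  haveI := Classical.decEq K
  refine ⟨{ toEquiv := Equiv.swap x.val y.val
            continuous_toFun := continuous_swap_isolated x y
            continuous_invFun := by
              have hcont := continuous_swap_isolated (K := K) x y
              have hh : ⇑(Equiv.swap x.val y.val).symm = ⇑(Equiv.swap x.val y.val) := by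
                rw [Equiv.symm_swap]
              show Continuous ⇑(Equiv.swap x.val y.val).symm
              rw [hh]
              exact hcont }, ?_, ?_⟩
  · intro z hz
    show Equiv.swap x.val y.val z = z
    refine Equiv.swap_apply_of_ne_of_ne ?_ ?_
    · rintro rfl; exact hz x.2
    · rintro rfl; exact hz y.2
  · intro w
    show Equiv.swap x.val y.val w.val = (Equiv.swap x y w).val
    by_cases hwx : w = x
    · subst hwx; rw [Equiv.swap_apply_left, Equiv.swap_apply_left]
    · by_cases hwy : w = y
      · subst hwy; rw [Equiv.swap_apply_right, Equiv.swap_apply_right]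
      · rw [Equiv.swap_apply_of_ne_of_ne (fun hc => hwx (Subtype.ext hc))
          (fun hc => hwy (Subtype.ext hc)),
          Equiv.swap_apply_of_ne_of_ne hwx hwy]

lemma permEnt_isEntourage {Y : Type v} (F : Set (Equiv.Perm Y)) : IsEntourage (permEnt F) :=
  fun _ => Or.inl rfl

lemma permCoarse_isCoarse [T2Space K] :
    IsCoarseStructure (permCoarse (homeoPerms K)) := by
  classical
  constructor
  · exact fun E hE => hE.1
  · rintro ⟨w₁, w₂⟩
    by_cases hw : w₁ = w₂
    · subst hw
      exact ⟨permEnt (↑(∅ : Finset (Equiv.Perm ↥(isolatedPoints K)))),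
        ⟨permEnt_isEntourage _, ∅, by simp, subset_rfl⟩, Or.inl rfl⟩
    · refine ⟨permEnt (↑({Equiv.swap w₁ w₂} : Finset (Equiv.Perm ↥(isolatedPoints K)))),
        ⟨permEnt_isEntourage _, {Equiv.swap w₁ w₂}, ?_, subset_rfl⟩, ?_⟩
      · intro g hg
        rw [Finset.coe_singleton, Set.mem_singleton_iff] at hg
        rw [hg]
        exact swap_mem_homeoPerms w₁ w₂
      · exact Or.inr ⟨Equiv.swap w₁ w₂, by simp, (Equiv.swap_apply_left w₁ w₂).symm⟩
  · rintro E ⟨hEent, F₁, hF₁sub, hEsub⟩ F ⟨hFent, F₂, hF₂sub, hFsub⟩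
    set F' : Finset (Equiv.Perm ↥(isolatedPoints K)) :=
      F₁ ∪ F₂.image (fun g => g⁻¹) ∪
        Finset.image (fun p : Equiv.Perm ↥(isolatedPoints K) × Equiv.Perm ↥(isolatedPoints K)
          => p.1⁻¹ * p.2) (F₂ ×ˢ F₁) with hF'
    have hF'G : (↑F' : Set (Equiv.Perm ↥(isolatedPoints K))) ⊆ homeoPerms K := by
      intro g hg
      rw [hF'] at hg
      simp only [Finset.coe_union, Set.mem_union, Finset.coe_image, Set.mem_image,
        Finset.mem_coe, Finset.mem_product] at hg
      rcases hg with (hg | ⟨g₂, hg₂, rfl⟩) | ⟨⟨p₁, p₂⟩, ⟨hp₁, hp₂⟩, rfl⟩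
      · exact hF₁sub hg
      · exact homeoPerms_inv (hF₂sub hg₂)
      · have : p₁⁻¹ * p₂ = p₂.trans p₁⁻¹ := rfl
        rw [this]
        exact homeoPerms_comp (hF₁sub hp₂) (homeoPerms_inv (hF₂sub hp₁))
    refine ⟨permEnt ↑F', ⟨permEnt_isEntourage _, F', hF'G, subset_rfl⟩, ?_⟩
    rintro ⟨x, z⟩ ⟨y, hxy, hyz⟩
    have hxy' : (x, y).2 = (x, y).1 ∨ ∃ g ∈ (↑F₁ : Set (Equiv.Perm ↥(isolatedPoints K))), (x, y).2 = g (x, y).1 :=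
      hEsub hxy
    have hzy' : (z, y).2 = (z, y).1 ∨ ∃ g ∈ (↑F₂ : Set (Equiv.Perm ↥(isolatedPoints K))), (z, y).2 = g (z, y).1 :=
      hFsub hyz
    have hmem1 : ∀ g ∈ F₁, g ∈ F' := by
      intro g hg
      rw [hF']
      exact Finset.mem_union_left _ (Finset.mem_union_left _ hg)
    have hmem2 : ∀ g ∈ F₂, g⁻¹ ∈ F' := by
      intro g hg
      rw [hF']
      exact Finset.mem_union_left _ (Finset.mem_union_right _ (Finset.mem_image_of_mem _ hg))
    have hmem3 : ∀ g ∈ F₂, ∀ g' ∈ F₁, g⁻¹ * g' ∈ F' := by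
      intro g hg g' hg'
      rw [hF']
      refine Finset.mem_union_right _ ?_
      refine Finset.mem_image.mpr ⟨(g, g'), ?_, rfl⟩
      exact Finset.mem_product.mpr ⟨hg, hg'⟩
    rcases hxy' with hy1 | ⟨g, hg, hy1⟩ <;> rcases hzy' with hy2 | ⟨g', hg', hy2⟩
    · exact Or.inl (by show z = x; simp only [] at hy1 hy2; rw [← hy2]; exact hy1)
    · refine Or.inr ⟨g'⁻¹, hmem2 g' (Finset.mem_coe.mp hg'), ?_⟩
      show z = g'⁻¹ x
      simp only [] at hy1 hy2
      rw [← hy1, hy2, Equiv.Perm.inv_def, Equiv.symm_apply_apply]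
    · refine Or.inr ⟨g, hmem1 g (Finset.mem_coe.mp hg), ?_⟩
      show z = g x
      simp only [] at hy1 hy2
      rw [← hy2, hy1]
    · refine Or.inr ⟨g'⁻¹ * g, hmem3 g' (Finset.mem_coe.mp hg') g (Finset.mem_coe.mp hg), ?_⟩
      show z = (g'⁻¹ * g) x
      simp only [] at hy1 hy2
      rw [Equiv.Perm.mul_apply, ← hy1, hy2, Equiv.Perm.inv_def, Equiv.symm_apply_apply]
  · rintro E F hEent hEF ⟨hFent, F', hsub, hFsub⟩
    exact ⟨hEent, F', hsub, hEF.trans hFsub⟩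

lemma permCoarse_finitary {Y : Type v} {G : Set (Equiv.Perm Y)} :
    IsFinitaryCoarse (permCoarse G) := by
  classical
  rintro E ⟨hEent, F, hFsub, hEsub⟩
  refine ⟨F.card + 1, fun x => ?_⟩
  have hball : entBall E x ⊆ ↑(insert x (F.image fun g => g x)) := by
    intro y hy
    rcases hEsub hy with hh | ⟨g, hg, hh⟩
    · have hh' : y = x := hh
      rw [hh']; exact Finset.mem_insert_self _ _
    · have hh' : y = g x := hh
      rw [hh']
      exact Finset.mem_insert_of_mem (Finset.mem_image_of_mem _ (Finset.mem_coe.mp hg))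
  have hfin : (entBall E x).Finite := (Set.toFinite _).subset hball
  refine ⟨hfin, ?_⟩
  calc (entBall E x).ncard ≤ (↑(insert x (F.image fun g => g x)) : Set _).ncard :=
        Set.ncard_le_ncard hball (Set.toFinite _)
    _ = (insert x (F.image fun g => g x)).card := by
        rw [Set.ncard_coe_finset]
    _ ≤ (F.image fun g => g x).card + 1 := Finset.card_insert_le _ _
    _ ≤ F.card + 1 := Nat.add_le_add_right (Finset.card_image_le) 1

end PermCoarse
section Backward
variable {K : Type u₁} [TopologicalSpace K]

lemma sg_finite [CompactSpace K] {f : K → ℝ} (hf : Continuous f)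
    {g : Equiv.Perm ↥(isolatedPoints K)} (hg : g ∈ homeoPerms K) {ε' : ℝ} (hε' : 0 < ε') :
    {x : ↥(isolatedPoints K) | ε' ≤ dist (f (g x).val) (f x.val)}.Finite := by
  set S := {x : ↥(isolatedPoints K) | ε' ≤ dist (f (g x).val) (f x.val)} with hS
  by_contra hfin
  have hinf : S.Infinite := hfin
  set u := hinf.natEmbedding with hu
  set w : ℕ → K := fun n => ((u n : ↥S) : ↥(isolatedPoints K)).val with hw
  have hwinj : Function.Injective w := by
    intro m n hmn
    have : (u m : ↥S) = (u n : ↥S) := Subtype.ext (Subtype.ext hmn)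
    exact u.injective this
  haveI : (Filter.map w Filter.atTop).NeBot := Filter.map_neBot
  obtain ⟨z, hzc⟩ := exists_clusterPt_of_compactSpace (Filter.map w Filter.atTop)
  have hzNI : z ∉ isolatedPoints K := by
    intro hziso
    have hzn : ({z} : Set K) ∈ 𝓝 z := (hziso : IsOpen {z}).mem_nhds rfl
    have hne : ∀ N : ℕ, ∃ n ≥ N, w n = z := by
      intro N
      have h1 : (({z} : Set K) ∩ (w '' Set.Ici N)).Nonempty := by
        have hNB : (𝓝 z ⊓ Filter.map w Filter.atTop).NeBot := hzc
        exact Filter.inf_neBot_iff.mp hNB hzn (Filter.image_mem_map (Filter.Ici_mem_atTop N))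
      obtain ⟨k, hk1, n, hn, rfl⟩ := h1
      exact ⟨n, hn, hk1⟩
    obtain ⟨n₀, _, hn₀⟩ := hne 0
    obtain ⟨n₁, hn₁ge, hn₁⟩ := hne (n₀ + 1)
    exact absurd (hwinj (hn₀.trans hn₁.symm)) (by omega)
  obtain ⟨hh, hh1, hh2⟩ := hg
  have hhz : hh z = z := hh1 z hzNI
  set d : K → ℝ := fun v => dist (f (hh v)) (f v) with hd
  have hdcont : Continuous d := (hf.comp hh.continuous).dist hf
  set C := {v : K | ε' ≤ d v} with hC
  have hCclosed : IsClosed C := isClosed_le continuous_const hdcont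
  have hwC : ∀ n, w n ∈ C := by
    intro n
    have hx : ε' ≤ dist (f ((g ((u n : ↥S) : ↥(isolatedPoints K))).val))
        (f (((u n : ↥S) : ↥(isolatedPoints K)).val)) := (u n).2
    simp only [hC, hw, hd, Set.mem_setOf_eq]
    rw [hh2 ((u n : ↥S) : ↥(isolatedPoints K))]
    exact hx
  have hle : Filter.map w Filter.atTop ≤ Filter.principal C :=
    Filter.le_principal_iff.mpr (Filter.mem_map.mpr
      (Filter.Eventually.of_forall hwC))
  have hzC : z ∈ C := by
    rw [← hCclosed.closure_eq]
    exact mem_closure_iff_clusterPt.mpr (hzc.mono hle)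
  have hzC' : ε' ≤ dist (f (hh z)) (f z) := hzC
  rw [hhz, dist_self] at hzC'
  linarith

lemma so_of_continuous [CompactSpace K] [T2Space K]
    [Nonempty ↥(isolatedPoints K)] {f : K → ℝ} (hf : Continuous f) :
    (fun x : ↥(isolatedPoints K) => f x.val) ∈ soSet (permCoarse (homeoPerms K)) ℝ := by
  set ψ : ↥(isolatedPoints K) → ℝ := fun x => f x.val with hψ
  constructor
  · refine (isCompact_range hf).isBounded.subset ?_
    rintro _ ⟨x, rfl⟩
    exact ⟨x.val, rfl⟩
  · rintro ε hε E ⟨hEent, F, hFG, hEsub⟩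
    set B : Set ↥(isolatedPoints K) :=
      ⋃ g ∈ (↑F : Set (Equiv.Perm ↥(isolatedPoints K))),
        {x | ε / 3 ≤ dist (ψ (g x)) (ψ x)} with hB
    have hBfin : B.Finite := by
      refine Set.Finite.biUnion F.finite_toSet fun g hg => ?_
      exact sg_finite hf (hFG hg) (by linarith)
    refine ⟨B, finite_bounded permCoarse_isCoarse hBfin, fun x hx => ?_⟩
    have hclose : ∀ v ∈ ψ '' entBall E x, dist v (ψ x) ≤ ε / 3 := by
      rintro _ ⟨y, hy, rfl⟩
      rcases hEsub hy with hh | ⟨g, hg, hh⟩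
      · have hh' : y = x := hh
        rw [hh', dist_self]; linarith
      · have hh' : y = g x := hh
        rw [hh']
        have hxg : x ∉ {x' | ε / 3 ≤ dist (ψ (g x')) (ψ x')} := by
          intro hc
          exact hx (Set.mem_biUnion hg hc)
        rw [Set.mem_setOf_eq, not_le] at hxg
        exact le_of_lt hxg
    have hdiam : EMetric.diam (ψ '' entBall E x) ≤ ENNReal.ofReal (2 * (ε / 3)) := by
      refine EMetric.diam_le fun v₁ h₁ v₂ h₂ => ?_
      rw [edist_dist]
      refine ENNReal.ofReal_le_ofReal ?_
      calc dist v₁ v₂ ≤ dist v₁ (ψ x) + dist (ψ x) v₂ := dist_triangle _ _ _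
        _ ≤ ε / 3 + ε / 3 := by
            rw [dist_comm (ψ x) v₂]
            exact add_le_add (hclose v₁ h₁) (hclose v₂ h₂)
        _ = 2 * (ε / 3) := by ring
    refine lt_of_le_of_lt hdiam ?_
    rw [ENNReal.ofReal_lt_ofReal_iff hε]
    linarith

lemma osc_zero_of_msoft [T2Space K] (hM : IsMSoft K ℝ)
    {ψ : ↥(isolatedPoints K) → ℝ} (hψ : ψ ∈ soSet (permCoarse (homeoPerms K)) ℝ)
    (z : K) : oscAt ψ z = 0 := by
  by_contra hne
  have hpos : 0 < oscAt ψ z := pos_iff_ne_zero.mpr hne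
  obtain ⟨σ, hσ, ε, hε, hinf⟩ := hM ψ hψ.1 ⟨z, hpos⟩
  classical
  have hE : permEnt (↑({σ} : Finset (Equiv.Perm ↥(isolatedPoints K)))) ∈
      permCoarse (homeoPerms K) := by
    refine ⟨permEnt_isEntourage _, {σ}, ?_, subset_rfl⟩
    intro g hg
    rw [Finset.coe_singleton, Set.mem_singleton_iff] at hg
    rw [hg]; exact hσ
  obtain ⟨B, hB, hdiam⟩ := hψ.2 ε hε _ hE
  have hBfin : B.Finite := bounded_finite permCoarse_finitary hB
  obtain ⟨x, hxS, hxB⟩ := (hinf.diff hBfin).nonempty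
  have h1 : σ x ∈ entBall (permEnt (↑({σ} : Finset (Equiv.Perm ↥(isolatedPoints K))))) x :=
    Or.inr ⟨σ, by simp, rfl⟩
  have h2 : x ∈ entBall (permEnt (↑({σ} : Finset (Equiv.Perm ↥(isolatedPoints K))))) x :=
    Or.inl rfl
  have hle : edist (ψ (σ x)) (ψ x) ≤
      EMetric.diam (ψ '' entBall (permEnt
        (↑({σ} : Finset (Equiv.Perm ↥(isolatedPoints K))))) x) :=
    EMetric.edist_le_diam_of_mem ⟨σ x, h1, rfl⟩ ⟨x, h2, rfl⟩
  have hlt := lt_of_le_of_lt hle (hdiam x hxB)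
  rw [edist_dist] at hlt
  have : dist (ψ (σ x)) (ψ x) < ε := (ENNReal.ofReal_lt_ofReal_iff hε).mp hlt
  exact absurd hxS (by rw [Set.mem_setOf_eq]; linarith)

lemma exists_extension (hdense : Dense (isolatedPoints K))
    {ψ : ↥(isolatedPoints K) → ℝ} (hosc : ∀ z : K, oscAt ψ z = 0) :
    ∃ F : K → ℝ, Continuous F ∧ ∀ x : ↥(isolatedPoints K), F x.val = ψ x := by
  haveI : DiscreteTopology ↥(isolatedPoints K) := by
    rw [discreteTopology_iff_isOpen_singleton]
    intro a
    rw [isOpen_induced_iff]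
    refine ⟨{a.val}, a.2, ?_⟩
    ext b
    simp [Subtype.ext_iff]
  have di : IsDenseInducing (Subtype.val : ↥(isolatedPoints K) → K) :=
    ⟨Topology.IsInducing.subtypeVal, hdense.denseRange_val⟩
  have htend : ∀ zb : K, ∃ c : ℝ,
      Filter.Tendsto ψ (Filter.comap Subtype.val (𝓝 zb)) (𝓝 c) := by
    intro zb
    haveI hNB : (Filter.comap (Subtype.val : ↥(isolatedPoints K) → K) (𝓝 zb)).NeBot :=
      mem_closure_iff_comap_neBot.mp (hdense zb)
    have hcauchy : Cauchy (Filter.map ψ (Filter.comap Subtype.val (𝓝 zb))) := by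
      rw [Metric.cauchy_iff]
      refine ⟨Filter.map_neBot, fun ε hε => ?_⟩
      have hlt : oscAt ψ zb < ENNReal.ofReal ε := by
        rw [hosc zb]
        exact ENNReal.ofReal_pos.mpr hε
      rw [oscAt] at hlt
      rw [iInf_lt_iff] at hlt
      obtain ⟨O, hlt⟩ := hlt
      rw [iInf_lt_iff] at hlt
      obtain ⟨hO, hlt⟩ := hlt
      rw [iInf_lt_iff] at hlt
      obtain ⟨hzO, hlt⟩ := hlt
      refine ⟨ψ '' (Subtype.val ⁻¹' O), ?_, ?_⟩
      · exact Filter.image_mem_map (Filter.preimage_mem_comap (hO.mem_nhds hzO))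
      · intro v₁ h₁ v₂ h₂
        have hed : edist v₁ v₂ < ENNReal.ofReal ε :=
          lt_of_le_of_lt (EMetric.edist_le_diam_of_mem h₁ h₂) hlt
        rw [edist_dist] at hed
        exact (ENNReal.ofReal_lt_ofReal_iff hε).mp hed
    obtain ⟨c, hc⟩ := CompleteSpace.complete hcauchy
    exact ⟨c, hc⟩
  refine ⟨di.extend ψ, di.continuous_extend htend, fun x => ?_⟩
  exact di.extend_eq (continuous_of_discreteTopology) x

end Backward
section Assembly
variable {K : Type u₁} [TopologicalSpace K]

lemma backward_main (hK : IsCompactification K) (hM : IsMSoft K ℝ) :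
    ∃ (X : Type u₁) (𝓔 : Set (Set (X × X))), IsCoarseStructure 𝓔 ∧ IsFinitaryCoarse 𝓔 ∧
      Nonempty (K ≃ₜ HComp 𝓔 ℝ) := by
  obtain ⟨hcomp, ht2, hdense⟩ := hK
  haveI := hcomp
  haveI := ht2
  rcases isEmpty_or_nonempty K with hemp | hne
  · refine ⟨K, ∅, ?_, ?_, ⟨?_⟩⟩
    · constructor
      · exact fun E hE => absurd hE (Set.notMem_empty E)
      · exact fun p => (IsEmpty.false p.1).elim
      · exact fun E hE => absurd hE (Set.notMem_empty E)
      · exact fun E F _ _ hF => absurd hF (Set.notMem_empty F)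
    · exact fun E hE => absurd hE (Set.notMem_empty E)
    · haveI : IsEmpty (HComp (∅ : Set (Set (K × K))) ℝ) := by
        refine ⟨fun p => ?_⟩
        have h0 : Set.range (deltaMap (∅ : Set (Set (K × K))) ℝ) = ∅ :=
          Set.range_eq_empty _
        have h2 : p.1 ∈ closure (Set.range (deltaMap (∅ : Set (Set (K × K))) ℝ)) := p.2
        rw [h0, closure_empty] at h2
        exact h2
      have hcont : ∀ (Z W : Type u₁) (_ : TopologicalSpace Z) (_ : TopologicalSpace W)
          (_ : IsEmpty Z) (f : Z → W), Continuous f := by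
        intro Z W _ _ hZ f
        rw [continuous_iff_continuousAt]
        exact fun a => (IsEmpty.false a).elim
      exact { toEquiv := Equiv.equivOfIsEmpty _ _
              continuous_toFun := hcont _ _ _ _ hemp _
              continuous_invFun := hcont _ _ _ _ inferInstance _ }
  · haveI hXne : Nonempty ↥(isolatedPoints K) := (hdense.nonempty).to_subtype
    set 𝓔K := permCoarse (homeoPerms K) with h𝓔K
    have hc : IsCoarseStructure 𝓔K := permCoarse_isCoarse
    have hfin : IsFinitaryCoarse 𝓔K := permCoarse_finitary
    refine ⟨↥(isolatedPoints K), 𝓔K, hc, hfin, ⟨?_⟩⟩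
    have hext : ∀ f : ↥(soSet 𝓔K ℝ), ∃ F : K → ℝ, Continuous F ∧
        ∀ x : ↥(isolatedPoints K), F x.val = f.1 x :=
      fun f => exists_extension hdense (fun z => osc_zero_of_msoft hM f.2 z)
    choose Ext hExtCont hExtVal using hext
    set Φ : K → (↥(soSet 𝓔K ℝ) → ℝ) := fun z f => Ext f z with hΦ
    have hΦcont : Continuous Φ := continuous_pi fun f => hExtCont f
    have hΦδ : ∀ x : ↥(isolatedPoints K), Φ x.val = deltaMap 𝓔K ℝ x :=
      fun x => funext fun f => hExtVal f x
    have hrange : ∀ z : K, Φ z ∈ hCompSet 𝓔K ℝ := by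
      intro z
      have h1 : Φ '' closure (isolatedPoints K) ⊆ closure (Φ '' (isolatedPoints K)) :=
        image_closure_subset_closure_image hΦcont
      have h2 : Φ z ∈ closure (Φ '' (isolatedPoints K)) :=
        h1 ⟨z, hdense z, rfl⟩
      refine closure_mono ?_ h2
      rintro _ ⟨w, hw, rfl⟩
      exact ⟨⟨w, hw⟩, (hΦδ ⟨w, hw⟩).symm⟩
    set ΦH : K → HComp 𝓔K ℝ := fun z => ⟨Φ z, hrange z⟩ with hΦH
    have hΦHcont : Continuous ΦH := hΦcont.subtype_mk _
    have hinj : Function.Injective ΦH := by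
      intro z₁ z₂ h12
      by_contra hne'
      obtain ⟨fc, hf0, hf1, _⟩ := exists_continuous_zero_one_of_isClosed
        (isClosed_singleton (x := z₁)) (isClosed_singleton (x := z₂))
        (by simp [hne'])
      have hψf : (fun x : ↥(isolatedPoints K) => fc x.val) ∈ soSet 𝓔K ℝ :=
        so_of_continuous fc.continuous
      have hkey : Ext ⟨_, hψf⟩ = fc := by
        refine Continuous.ext_on hdense (hExtCont _) fc.continuous ?_
        intro w hw
        exact hExtVal ⟨_, hψf⟩ ⟨w, hw⟩
      have h3 : Φ z₁ ⟨_, hψf⟩ = Φ z₂ ⟨_, hψf⟩ := by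
        have := congrArg Subtype.val h12
        exact congrFun this _
      rw [hΦ] at h3
      simp only [hkey] at h3
      have h01 : fc z₁ = 0 := hf0 rfl
      have h11 : fc z₂ = 1 := hf1 rfl
      rw [h01, h11] at h3
      exact zero_ne_one h3
    have hsurj : Function.Surjective ΦH := by
      intro p
      have hRclosed : IsClosed (Set.range Φ) := (isCompact_range hΦcont).isClosed
      have hsub : closure (Set.range (deltaMap 𝓔K ℝ)) ⊆ Set.range Φ := by
        refine hRclosed.closure_subset_iff.mpr ?_
        rintro _ ⟨x, rfl⟩
        exact ⟨x.val, hΦδ x⟩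
      obtain ⟨z, hz⟩ := hsub p.2
      exact ⟨z, Subtype.ext hz⟩
    exact Continuous.homeoOfEquivCompactToT2
      (f := Equiv.ofBijective ΦH ⟨hinj, hsurj⟩) hΦHcont

end Assembly

/-- A compactification `K` is homeomorphic to the Higson compactification
of some finitary coarse space iff `K` is `ℝ`-soft. -/
theorem statement6 (K : Type u) [TopologicalSpace K] (hK : IsCompactification K) :
    (∃ (X : Type u) (𝓔 : Set (Set (X × X))), IsCoarseStructure 𝓔 ∧ IsFinitaryCoarse 𝓔 ∧
      Nonempty (K ≃ₜ HComp 𝓔 ℝ)) ↔ IsMSoft K ℝ := by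
  constructor
  · rintro ⟨X, 𝓔, hc, hfin, ⟨e⟩⟩
    exact msoft_transfer e (msoft_hcomp hc hfin)
  · intro hM
    exact backward_main hK hM
end

section
/- Let M be a proper metric space. Every ℝ-soft compactification is M-soft. -/
open Set Filter Topology

universe u u₁ u₂ v w

/-- For a proper metric space `M`, every `ℝ`-soft compactification is `M`-soft. -/
theorem statement9 (M : Type v) [MetricSpace M] [ProperSpace M] [Nontrivial M]
    (K : Type u) [TopologicalSpace K] (hK : IsCompactification K)
    (hsoft : IsMSoft K ℝ) : IsMSoft K M := by
  intro φ hφb hosc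
  obtain ⟨z, hz⟩ := hosc
  obtain ⟨δ, hδ0, hδ⟩ : ∃ δ : ℝ, 0 < δ ∧ ENNReal.ofReal δ ≤ oscAt φ z := by
    rcases eq_or_ne (oscAt φ z) ⊤ with h | h
    · exact ⟨1, one_pos, by simp [h]⟩
    · exact ⟨(oscAt φ z).toReal, ENNReal.toReal_pos hz.ne' h,
        (ENNReal.ofReal_toReal h).le⟩
  have hl : (comap (Subtype.val : isolatedPoints K → K) (𝓝 z)).NeBot := by
    rw [← mem_closure_iff_comap_neBot]
    exact hK.2.2 z
  set l := comap (Subtype.val : isolatedPoints K → K) (𝓝 z) with hl_def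
  set G := map φ l with hG_def
  have hGne : G.NeBot := hl.map φ
  have hGle : G ≤ 𝓟 (closure (Set.range φ)) :=
    le_principal_iff.mpr (mem_map.mpr (univ_mem' fun x => subset_closure (mem_range_self x)))
  have hcomp : IsCompact (closure (Set.range φ)) := hφb.isCompact_closure
  have hmemG : ∀ O : Set K, IsOpen O → z ∈ O → φ '' (Subtype.val ⁻¹' O) ∈ G := by
    intro O hO hzO
    exact image_mem_map (preimage_mem_comap (hO.mem_nhds hzO))
  have hdiam : ∀ O : Set K, IsOpen O → z ∈ O →
      ENNReal.ofReal δ ≤ EMetric.diam (φ '' (Subtype.val ⁻¹' O)) := by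
    intro O hO hzO
    exact hδ.trans (iInf_le_of_le O (iInf_le_of_le hO (iInf_le _ hzO)))
  have hGsets : ∀ S ∈ G, ∃ O : Set K, IsOpen O ∧ z ∈ O ∧ φ '' (Subtype.val ⁻¹' O) ⊆ S := by
    intro S hS
    rw [hG_def, mem_map, hl_def, mem_comap] at hS
    obtain ⟨t, ht, hts⟩ := hS
    obtain ⟨O, hOt, hO, hzO⟩ := mem_nhds_iff.mp ht
    refine ⟨O, hO, hzO, ?_⟩
    rintro _ ⟨x, hx, rfl⟩
    exact hts (preimage_mono hOt hx)
  obtain ⟨p, hp_mem, hp⟩ := hcomp.exists_clusterPt hGle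
  have hfar : ∀ O : Set K, IsOpen O → z ∈ O → ∃ u ∈ φ '' (Subtype.val ⁻¹' O),
      u ∉ Metric.ball p (δ/4) := by
    intro O hO hzO
    by_contra h
    push_neg at h
    have hle : EMetric.diam (φ '' (Subtype.val ⁻¹' O)) ≤ ENNReal.ofReal (δ/2) := by
      apply EMetric.diam_le
      intro a ha b hb
      rw [edist_dist]
      apply ENNReal.ofReal_le_ofReal
      have ha' := Metric.mem_ball.mp (h a ha)
      have hb' := Metric.mem_ball.mp (h b hb)
      calc dist a b ≤ dist a p + dist p b := dist_triangle _ _ _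
        _ ≤ δ/4 + δ/4 := by
            rw [dist_comm p b]; exact add_le_add ha'.le hb'.le
        _ = δ/2 := by ring
    have := (hdiam O hO hzO).trans hle
    rw [ENNReal.ofReal_le_ofReal_iff (by linarith)] at this
    linarith
  have hG'ne : (G ⊓ 𝓟 ((Metric.ball p (δ/4))ᶜ)).NeBot := by
    rw [inf_principal_neBot_iff]
    intro S hS
    obtain ⟨O, hO, hzO, hsub⟩ := hGsets S hS
    obtain ⟨u, hu, hub⟩ := hfar O hO hzO
    exact ⟨u, hsub hu, hub⟩
  set G' := G ⊓ 𝓟 ((Metric.ball p (δ/4))ᶜ) with hG'_def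
  obtain ⟨q, hq_mem, hq'⟩ := hcomp.exists_clusterPt (f := G') (le_trans inf_le_left hGle)
  have hq : ClusterPt q G := hq'.mono inf_le_left
  have hqball : q ∉ Metric.ball p (δ/4) := by
    have hmem : ((Metric.ball p (δ/4))ᶜ : Set M) ∈ G' :=
      mem_inf_of_right (mem_principal_self _)
    have hqc : q ∈ closure ((Metric.ball p (δ/4))ᶜ) := by
      rw [mem_closure_iff_nhds]
      intro t ht
      exact clusterPt_iff_nonempty.mp hq' ht hmem
    rwa [(Metric.isOpen_ball.isClosed_compl).closure_eq] at hqc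
  have hdpq : 0 < dist p q := by
    rw [Metric.mem_ball, not_lt] at hqball
    rw [dist_comm]
    linarith
  set ψ : ↥(isolatedPoints K) → ℝ := fun x => dist (φ x) p with hψ_def
  have hψb : Bornology.IsBounded (Set.range ψ) := by
    obtain ⟨C, hC⟩ := Metric.isBounded_iff.mp hφb
    rw [Metric.isBounded_iff]
    refine ⟨C, ?_⟩
    rintro _ ⟨x, rfl⟩ _ ⟨y, rfl⟩
    rw [hψ_def, Real.dist_eq]
    exact (abs_dist_sub_le _ _ _).trans (hC (mem_range_self x) (mem_range_self y))
  have hoscψ : 0 < oscAt ψ z := by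
    have h2 : (0:ENNReal) < ENNReal.ofReal (dist p q / 2) := by
      rw [ENNReal.ofReal_pos]; linarith
    refine lt_of_lt_of_le h2 ?_
    refine le_iInf fun O => le_iInf fun hO => le_iInf fun hzO => ?_
    have hS := hmemG O hO hzO
    obtain ⟨a, ha, haS⟩ := clusterPt_iff_nonempty.mp hp
      (Metric.ball_mem_nhds p (by linarith : (0:ℝ) < dist p q / 4)) hS
    obtain ⟨b, hb, hbS⟩ := clusterPt_iff_nonempty.mp hq
      (Metric.ball_mem_nhds q (by linarith : (0:ℝ) < dist p q / 4)) hS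
    obtain ⟨xa, hxa, rfl⟩ := haS
    obtain ⟨xb, hxb, rfl⟩ := hbS
    rw [Metric.mem_ball] at ha hb
    calc ENNReal.ofReal (dist p q / 2) ≤ edist (ψ xa) (ψ xb) := by
          rw [edist_dist]
          apply ENNReal.ofReal_le_ofReal
          simp only [hψ_def, Real.dist_eq]
          have t1 : dist p q ≤ dist p (φ xb) + dist (φ xb) q := dist_triangle _ _ _
          have h4 : dist p q / 2 ≤ dist (φ xb) p - dist (φ xa) p := by
            rw [dist_comm (φ xb) p]; linarith
          calc dist p q / 2 ≤ dist (φ xb) p - dist (φ xa) p := h4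
            _ ≤ |dist (φ xb) p - dist (φ xa) p| := le_abs_self _
            _ = |dist (φ xa) p - dist (φ xb) p| := abs_sub_comm _ _
      _ ≤ EMetric.diam (ψ '' (Subtype.val ⁻¹' O)) :=
          EMetric.edist_le_diam_of_mem ⟨xa, hxa, rfl⟩ ⟨xb, hxb, rfl⟩
  obtain ⟨σ, hσ, ε, hε, hinf⟩ := hsoft ψ hψb ⟨z, hoscψ⟩
  refine ⟨σ, hσ, ε, hε, hinf.mono ?_⟩
  intro x hx
  simp only [mem_setOf_eq, hψ_def, Real.dist_eq] at hx ⊢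
  exact hx.trans (abs_dist_sub_le _ _ _)
end

section
/- Let M be a proper metric space. Every M-soft compactification is 𝟚-soft, where 𝟚 = {0,1} is the doubleton with the {0,1}-valued metric. -/
open Set Filter Topology

universe u u₁ u₂ v w

/-- For a proper metric space `M`, every `M`-soft compactification is
`𝟚`-soft, where `𝟚 = {0,1} ⊆ ℝ` carries the `{0,1}`-valued metric. -/
theorem statement10 (M : Type v) [MetricSpace M] [ProperSpace M] [Nontrivial M]
    (K : Type u) [TopologicalSpace K] (hK : IsCompactification K)
    (hsoft : IsMSoft K M) : IsMSoft K ↥({0, 1} : Set ℝ) := by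
  classical
  obtain ⟨a, b, hab⟩ := exists_pair_ne M
  set T := ↥({0, 1} : Set ℝ)
  have hT : ∀ x : T, x.val = 0 ∨ x.val = 1 := fun x => x.2
  set ι : T → M := fun x => if x.val = 0 then a else b with hι_def
  have hι : ∀ u v : T, u ≠ v → edist (ι u) (ι v) = edist a b := by
    intro u v huv
    rcases hT u with hu | hu <;> rcases hT v with hv | hv
    · exact absurd (Subtype.ext (hu.trans hv.symm)) huv
    · simp [hι_def, hu, hv]
    · simp [hι_def, hu, hv, edist_comm]
    · exact absurd (Subtype.ext (hu.trans hv.symm)) huv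
  have hinj : ∀ u v : T, ι u = ι v → u = v := by
    intro u v h
    by_contra huv
    have := hι u v huv
    rw [h, edist_self] at this
    exact (edist_pos.mpr hab).ne' this.symm
  intro φ _ hosc
  obtain ⟨z, hz⟩ := hosc
  set ψ : ↥(isolatedPoints K) → M := fun x => ι (φ x) with hψ_def
  have hbd : Bornology.IsBounded (Set.range ψ) := by
    have : Set.range ψ ⊆ {a, b} := by
      rintro _ ⟨x, rfl⟩
      rcases hT (φ x) with h | h <;> simp [hψ_def, hι_def, h]
    exact ((Set.Finite.insert a (Set.finite_singleton b)).isBounded).subset this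
  have hoscψ : 0 < oscAt ψ z := by
    have key : edist a b ≤ oscAt ψ z := by
      refine le_iInf fun O => le_iInf fun hO => le_iInf fun hzO => ?_
      have h1 : oscAt φ z ≤ EMetric.diam (φ '' (Subtype.val ⁻¹' O)) :=
        iInf_le_of_le O (iInf_le_of_le hO (iInf_le _ hzO))
      have h2 : (φ '' (Subtype.val ⁻¹' O)).Nontrivial :=
        EMetric.diam_pos_iff.mp (lt_of_lt_of_le hz h1)
      obtain ⟨p, hp, q, hq, hpq⟩ := h2
      obtain ⟨x, hx, rfl⟩ := hp
      obtain ⟨y, hy, rfl⟩ := hq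
      calc edist a b = edist (ψ x) (ψ y) := (hι _ _ hpq).symm
        _ ≤ EMetric.diam (ψ '' (Subtype.val ⁻¹' O)) :=
          EMetric.edist_le_diam_of_mem (Set.mem_image_of_mem _ hx)
            (Set.mem_image_of_mem _ hy)
    exact lt_of_lt_of_le (edist_pos.mpr hab) key
  obtain ⟨σ, hσ, ε, hε, hinf⟩ := hsoft ψ hbd ⟨z, hoscψ⟩
  refine ⟨σ, hσ, 1, one_pos, hinf.mono ?_⟩
  intro x hx
  have hne : φ (σ x) ≠ φ x := by
    intro h
    have h2 : ψ (σ x) = ψ x := by simp [hψ_def, h]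
    simp only [Set.mem_setOf_eq] at hx
    rw [h2, dist_self] at hx
    exact absurd hx (not_le.mpr hε)
  have hvne : (φ (σ x)).val ≠ (φ x).val := fun h => hne (Subtype.ext h)
  have : dist (φ (σ x)) (φ x) = 1 := by
    rw [Subtype.dist_eq, Real.dist_eq]
    rcases hT (φ (σ x)) with h1 | h1 <;> rcases hT (φ x) with h2 | h2 <;>
      [exact absurd (h1.trans h2.symm) hvne; (rw [h1, h2]; norm_num); (rw [h1, h2]; norm_num); exact absurd (h1.trans h2.symm) hvne]
  simp at hx ⊢
  linarith [this]
end

section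
/- A compactification K is soft if for any disjoint sets A, B ⊆ K' whose closures in K intersect, there are sequences (aₙ)ₙ in A and (bₙ)ₙ in B that converge to the same point z ∈ K. -/
open Set Filter Topology

universe u u₁ u₂ v w

lemma extract_lemma {K : Type*} [TopologicalSpace K] [T1Space K] {z : K}
    (hz : z ∉ isolatedPoints K) (a b : ℕ → ↥(isolatedPoints K))
    (hta : Tendsto (fun n => (a n).val) atTop (𝓝 z))
    (htb : Tendsto (fun n => (b n).val) atTop (𝓝 z)) :
    ∃ φ : ℕ → ℕ, StrictMono φ ∧ Function.Injective (a ∘ φ) ∧ Function.Injective (b ∘ φ) := by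
  classical
  have hne : ∀ x : ↥(isolatedPoints K), (x : K) ≠ z := by
    rintro x rfl; exact hz x.2
  have key : ∀ (N : ℕ) (Fa Fb : Finset ↥(isolatedPoints K)),
      ∃ n, N ≤ n ∧ a n ∉ Fa ∧ b n ∉ Fb := by
    intro N Fa Fb
    have hfin : (Subtype.val '' ((Fa ∪ Fb : Finset _) : Set ↥(isolatedPoints K))).Finite :=
      ((Fa ∪ Fb).finite_toSet).image _
    have hop : IsOpen (Subtype.val '' ((Fa ∪ Fb : Finset _) : Set ↥(isolatedPoints K)))ᶜ :=
      hfin.isClosed.isOpen_compl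
    have hzmem : z ∈ (Subtype.val '' ((Fa ∪ Fb : Finset _) : Set ↥(isolatedPoints K)))ᶜ := by
      rintro ⟨x, _, hx⟩; exact hne x hx
    have hU : (Subtype.val '' ((Fa ∪ Fb : Finset _) : Set ↥(isolatedPoints K)))ᶜ ∈ 𝓝 z :=
      hop.mem_nhds hzmem
    have h1 : ∀ᶠ n in atTop, (a n).val ∈ _ := hta.eventually_mem hU
    have h2 : ∀ᶠ n in atTop, (b n).val ∈ _ := htb.eventually_mem hU
    obtain ⟨n, hn1, hn2, hn3⟩ := ((eventually_ge_atTop N).and (h1.and h2)).exists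
    refine ⟨n, hn1, fun hmem => hn2 ⟨a n, by simp [hmem], rfl⟩,
      fun hmem => hn3 ⟨b n, by simp [hmem], rfl⟩⟩
  let step : ℕ × Finset ↥(isolatedPoints K) × Finset ↥(isolatedPoints K) →
      ℕ × Finset ↥(isolatedPoints K) × Finset ↥(isolatedPoints K) := fun s =>
    ((key (s.1+1) s.2.1 s.2.2).choose,
      insert (a (key (s.1+1) s.2.1 s.2.2).choose) s.2.1,
      insert (b (key (s.1+1) s.2.1 s.2.2).choose) s.2.2)
  have hstep : ∀ s, s.1 < (step s).1 ∧ a (step s).1 ∉ s.2.1 ∧ b (step s).1 ∉ s.2.2 ∧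
      (step s).2.1 = insert (a (step s).1) s.2.1 ∧
      (step s).2.2 = insert (b (step s).1) s.2.2 := by
    intro s
    obtain ⟨h1, h2, h3⟩ := (key (s.1+1) s.2.1 s.2.2).choose_spec
    exact ⟨h1, h2, h3, rfl, rfl⟩
  let g : ℕ → ℕ × Finset ↥(isolatedPoints K) × Finset ↥(isolatedPoints K) :=
    fun k => step^[k+1] (0, ∅, ∅)
  have hg : ∀ k, g (k+1) = step (g k) := fun k => Function.iterate_succ_apply' step (k+1) _
  have hmem : ∀ k, a (g k).1 ∈ (g k).2.1 ∧ b (g k).1 ∈ (g k).2.2 := by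
    intro k
    have : ∃ s, g k = step s := by
      cases k with
      | zero => exact ⟨(0, ∅, ∅), rfl⟩
      | succ m => exact ⟨g m, hg m⟩
    obtain ⟨s, hs⟩ := this
    rw [hs, (hstep s).2.2.2.1, (hstep s).2.2.2.2]
    exact ⟨Finset.mem_insert_self _ _, Finset.mem_insert_self _ _⟩
  have hsub : ∀ j k, j ≤ k → (g j).2.1 ⊆ (g k).2.1 ∧ (g j).2.2 ⊆ (g k).2.2 := by
    intro j k hjk
    induction k with
    | zero => simp_all
    | succ m ih =>
      rcases Nat.lt_or_ge j (m+1) with hlt | hge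
      · have := ih (Nat.lt_succ_iff.mp hlt)
        rw [hg m, (hstep (g m)).2.2.2.1, (hstep (g m)).2.2.2.2]
        exact ⟨this.1.trans (Finset.subset_insert _ _), this.2.trans (Finset.subset_insert _ _)⟩
      · have : j = m+1 := le_antisymm hjk hge
        subst this; exact ⟨subset_rfl, subset_rfl⟩
  have hlt : ∀ j k, j < k → a (g j).1 ≠ a (g k).1 ∧ b (g j).1 ≠ b (g k).1 := by
    intro j k hjk
    cases k with
    | zero => omega
    | succ m =>
      have hsub' := hsub j m (Nat.lt_succ_iff.mp hjk)
      rw [hg m]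
      constructor
      · intro heq
        exact (hstep (g m)).2.1 (heq ▸ hsub'.1 (hmem j).1)
      · intro heq
        exact (hstep (g m)).2.2.1 (heq ▸ hsub'.2 (hmem j).2)
  refine ⟨fun k => (g k).1, strictMono_nat_of_lt_succ (fun k => by rw [hg k]; exact (hstep (g k)).1),
    ?_, ?_⟩
  · intro j k heq
    by_contra hne'
    rcases lt_or_gt_of_ne hne' with hh | hh
    · exact (hlt j k hh).1 heq
    · exact (hlt k j hh).1 heq.symm
  · intro j k heq
    by_contra hne'
    rcases lt_or_gt_of_ne hne' with hh | hh
    · exact (hlt j k hh).2 heq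
    · exact (hlt k j hh).2 heq.symm

lemma aux_swap {K : Type u} [TopologicalSpace K] [T2Space K] {z : K}
    (hz : z ∉ isolatedPoints K) (c d : ℕ → ↥(isolatedPoints K))
    (hcinj : Function.Injective c) (hdinj : Function.Injective d)
    (hcd : ∀ j k, c j ≠ d k)
    (htc : Tendsto (fun k => (c k).val) atTop (𝓝 z))
    (htd : Tendsto (fun k => (d k).val) atTop (𝓝 z)) :
    ∃ σ ∈ homeoPerms K, ∀ k, σ (c k) = d k := by
  classical
  have hne : ∀ x : ↥(isolatedPoints K), (x : K) ≠ z := by rintro x rfl; exact hz x.2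
  have hcv : Function.Injective (fun k => ((c k : K))) := fun j k hh => hcinj (Subtype.ext hh)
  have hdv : Function.Injective (fun k => ((d k : K))) := fun j k hh => hdinj (Subtype.ext hh)
  have hcdv : ∀ j k, ((c j : K)) ≠ ((d k : K)) := fun j k hh => hcd j k (Subtype.ext hh)
  let f : K → K := fun x =>
    if hx : ∃ k, x = ((c k : K)) then ((d (Classical.choose hx) : K))
    else if hx' : ∃ k, x = ((d k : K)) then ((c (Classical.choose hx') : K))
    else x
  have hfc : ∀ k, f ((c k : K)) = ((d k : K)) := by
    intro k
    have hx : ∃ j, ((c k : K)) = ((c j : K)) := ⟨k, rfl⟩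
    have h1 : f ((c k : K)) = ((d (Classical.choose hx) : K)) := dif_pos hx
    rw [h1, (hcv (Classical.choose_spec hx)).symm]
  have hfd : ∀ k, f ((d k : K)) = ((c k : K)) := by
    intro k
    have hx : ¬ ∃ j, ((d k : K)) = ((c j : K)) := by
      rintro ⟨j, hj⟩; exact hcdv j k hj.symm
    have hx' : ∃ j, ((d k : K)) = ((d j : K)) := ⟨k, rfl⟩
    have h1 : f ((d k : K)) = ((c (Classical.choose hx') : K)) :=
      (dif_neg hx).trans (dif_pos hx')
    rw [h1, (hdv (Classical.choose_spec hx')).symm]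
  have hfid : ∀ x, (¬ ∃ k, x = ((c k : K))) → (¬ ∃ k, x = ((d k : K))) → f x = x :=
    fun x h1 h2 => (dif_neg h1).trans (dif_neg h2)
  have hfiso : ∀ x, x ∉ isolatedPoints K → f x = x := by
    intro x hx
    refine hfid x ?_ ?_
    · rintro ⟨k, rfl⟩; exact hx (c k).2
    · rintro ⟨k, rfl⟩; exact hx (d k).2
  have hinvol : Function.Involutive f := by
    intro x
    by_cases hx : ∃ k, x = ((c k : K))
    · obtain ⟨k, rfl⟩ := hx; rw [hfc, hfd]
    · by_cases hx' : ∃ k, x = ((d k : K))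
      · obtain ⟨k, rfl⟩ := hx'; rw [hfd, hfc]
      · rw [hfid x hx hx', hfid x hx hx']
  have htail : ∀ W ∈ 𝓝 z, ∃ N, ∀ k, N ≤ k → ((c k : K)) ∈ W ∧ ((d k : K)) ∈ W := by
    intro W hW
    exact eventually_atTop.mp ((htc.eventually_mem hW).and (htd.eventually_mem hW))
  have hhead : ∀ N : ℕ, ∃ Fh : Set K, Fh.Finite ∧ z ∉ Fh ∧
      (∀ k, k < N → ((c k : K)) ∈ Fh ∧ ((d k : K)) ∈ Fh) ∧
      (∀ x ∈ Fh, x ∈ isolatedPoints K) := by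
    intro N
    refine ⟨(fun k => ((c k : K))) '' Set.Iio N ∪ (fun k => ((d k : K))) '' Set.Iio N,
      ((Set.finite_Iio N).image _).union ((Set.finite_Iio N).image _), ?_, ?_, ?_⟩
    · rintro (⟨k, _, hk⟩ | ⟨k, _, hk⟩)
      · exact hne (c k) hk
      · exact hne (d k) hk
    · intro k hk
      exact ⟨Or.inl ⟨k, hk, rfl⟩, Or.inr ⟨k, hk, rfl⟩⟩
    · rintro x (⟨k, _, hk⟩ | ⟨k, _, hk⟩)
      · exact hk ▸ (c k).2
      · exact hk ▸ (d k).2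
  have hfcont : Continuous f := by
    rw [continuous_iff_continuousAt]
    intro w
    by_cases hw : w ∈ isolatedPoints K
    · have hnw : 𝓝 w = pure w :=
        le_antisymm (le_pure_iff.mpr (hw.mem_nhds rfl)) (pure_le_nhds w)
      show Tendsto f (𝓝 w) (𝓝 (f w))
      rw [hnw]
      exact tendsto_pure_nhds f w
    · by_cases hwz : w = z
      · subst hwz
        have hfz : f w = w := hfiso w hw
        show Tendsto f (𝓝 w) (𝓝 (f w))
        rw [hfz, Filter.tendsto_def]
        intro U hU
        obtain ⟨U', hU'sub, hU'open, hzU'⟩ := mem_nhds_iff.mp hU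
        obtain ⟨N, hN⟩ := htail U' (hU'open.mem_nhds hzU')
        obtain ⟨Fh, hFfin, hzF, hFmem, _⟩ := hhead N
        apply mem_of_superset ((hU'open.sdiff hFfin.isClosed).mem_nhds ⟨hzU', hzF⟩)
        rintro x ⟨hxU', hxF⟩
        show f x ∈ U
        by_cases hx : ∃ k, x = ((c k : K))
        · obtain ⟨k, rfl⟩ := hx
          rw [hfc]
          have hkN : N ≤ k := by
            by_contra hcon
            exact hxF (hFmem k (by omega)).1
          exact hU'sub (hN k hkN).2
        · by_cases hx' : ∃ k, x = ((d k : K))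
          · obtain ⟨k, rfl⟩ := hx'
            rw [hfd]
            have hkN : N ≤ k := by
              by_contra hcon
              exact hxF (hFmem k (by omega)).2
            exact hU'sub (hN k hkN).1
          · rw [hfid x hx hx']
            exact hU'sub hxU'
      · obtain ⟨U0, W0, hU0, hW0, hwU0, hzW0, hdisj0⟩ := t2_separation hwz
        obtain ⟨N, hN⟩ := htail W0 (hW0.mem_nhds hzW0)
        obtain ⟨Fh, hFfin, _, hFmem, hFiso⟩ := hhead N
        have hwF : w ∉ Fh := fun hmem => hw (hFiso w hmem)
        have hVmem : (U0 \ Fh) ∈ 𝓝 w := (hU0.sdiff hFfin.isClosed).mem_nhds ⟨hwU0, hwF⟩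
        refine continuousAt_id.congr (eventually_of_mem hVmem ?_)
        rintro x ⟨hxU0, hxF⟩
        have hxid : f x = x := by
          refine hfid x ?_ ?_
          · rintro ⟨k, rfl⟩
            rcases lt_or_ge k N with hk | hk
            · exact hxF (hFmem k hk).1
            · exact Set.disjoint_left.mp hdisj0 hxU0 (hN k hk).1
          · rintro ⟨k, rfl⟩
            rcases lt_or_ge k N with hk | hk
            · exact hxF (hFmem k hk).2
            · exact Set.disjoint_left.mp hdisj0 hxU0 (hN k hk).2
        exact hxid.symm
  have hmaps : ∀ x : ↥(isolatedPoints K), f x.val ∈ isolatedPoints K := by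
    intro x
    by_cases hx : ∃ k, (x : K) = ((c k : K))
    · obtain ⟨k, hk⟩ := hx
      rw [hk, hfc]; exact (d k).2
    · by_cases hx' : ∃ k, (x : K) = ((d k : K))
      · obtain ⟨k, hk⟩ := hx'
        rw [hk, hfd]; exact (c k).2
      · rw [hfid _ hx hx']; exact x.2
  let σ0 : ↥(isolatedPoints K) → ↥(isolatedPoints K) := fun x => ⟨f x.val, hmaps x⟩
  have hσinv : Function.Involutive σ0 := fun x => Subtype.ext (hinvol x.val)
  let hh : K ≃ₜ K := Homeomorph.mk hinvol.toPerm hfcont hfcont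
  refine ⟨hσinv.toPerm, ⟨hh, fun w hw => hfiso w hw, fun x => rfl⟩,
    fun k => Subtype.ext (hfc k)⟩

/-- A compactification `K` is soft if for any disjoint `A, B ⊆ K'` with
intersecting closures there are sequences in `A` and in `B` converging to a common point. -/
theorem statement11 (K : Type u) [TopologicalSpace K] (hK : IsCompactification K)
    (h : ∀ A B : Set ↥(isolatedPoints K), Disjoint A B →
      (closure (Subtype.val '' A) ∩ closure (Subtype.val '' B)).Nonempty →
      ∃ (a : ℕ → ↥(isolatedPoints K)) (b : ℕ → ↥(isolatedPoints K)) (z : K),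
        (∀ n, a n ∈ A) ∧ (∀ n, b n ∈ B) ∧
        Filter.Tendsto (fun n => (a n).val) Filter.atTop (nhds z) ∧
        Filter.Tendsto (fun n => (b n).val) Filter.atTop (nhds z)) :
    IsSoft K := by
  classical
  obtain ⟨hcomp, ht2, hdense⟩ := hK
  haveI := hcomp
  haveI := ht2
  intro A B hAB hclos
  obtain ⟨a, b, z, hAa, hBb, hta, htb⟩ := h A B hAB hclos
  have hziso : z ∉ isolatedPoints K := by
    intro hz
    have h1 : ∀ᶠ n in atTop, (a n).val ∈ ({z} : Set K) :=
      hta.eventually_mem (hz.mem_nhds rfl)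
    have h2 : ∀ᶠ n in atTop, (b n).val ∈ ({z} : Set K) :=
      htb.eventually_mem (hz.mem_nhds rfl)
    obtain ⟨n, hn1, hn2⟩ := (h1.and h2).exists
    have heq : a n = b n := Subtype.ext (by
      simp only [Set.mem_singleton_iff] at hn1 hn2
      rw [hn1, hn2])
    exact Set.disjoint_left.mp hAB (hAa n) (heq ▸ hBb n)
  obtain ⟨φ, hφmono, hainj, hbinj⟩ := extract_lemma hziso a b hta htb
  set c : ℕ → ↥(isolatedPoints K) := a ∘ φ with hcdef
  set d : ℕ → ↥(isolatedPoints K) := b ∘ φ with hddef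
  have hcA : ∀ k, c k ∈ A := fun k => hAa _
  have hdB : ∀ k, d k ∈ B := fun k => hBb _
  have htc : Tendsto (fun k => (c k).val) atTop (𝓝 z) := hta.comp hφmono.tendsto_atTop
  have htd : Tendsto (fun k => (d k).val) atTop (𝓝 z) := htb.comp hφmono.tendsto_atTop
  have hcd : ∀ j k, c j ≠ d k := fun j k hh =>
    Set.disjoint_left.mp hAB (hcA j) (hh ▸ hdB k)
  obtain ⟨σ, hσmem, hσck⟩ := aux_swap hziso c d hainj hbinj hcd htc htd
  refine ⟨σ, hσmem, Set.Infinite.mono ?_ (Set.infinite_range_of_injective hainj)⟩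
  rintro x ⟨k, rfl⟩
  exact ⟨hcA k, by rw [hσck k]; exact hdB k⟩
end

section
/- Every compactification K such that the space K is Fréchet–Urysohn is soft. -/
open Set Filter Topology

universe u u₁ u₂ v w

section SwapAux

open scoped Classical

variable {α : Type*}

/-- The function swapping `a n ↔ b n` and fixing everything else. -/
noncomputable def swapFun (a b : ℕ → α) (x : α) : α :=
  if h : ∃ n, x = a n then b h.choose
  else if h : ∃ n, x = b n then a h.choose
  else x

variable {a b : ℕ → α}

lemma swapFun_a (ha : Function.Injective a) (n : ℕ) : swapFun a b (a n) = b n := by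
  have h : ∃ m, a n = a m := ⟨n, rfl⟩
  rw [swapFun, dif_pos h]
  exact congrArg b (ha h.choose_spec.symm)

lemma swapFun_b (hb : Function.Injective b) (hab : ∀ m n, a m ≠ b n) (n : ℕ) :
    swapFun a b (b n) = a n := by
  have h1 : ¬ ∃ m, b n = a m := by rintro ⟨m, hm⟩; exact hab m n hm.symm
  have h : ∃ m, b n = b m := ⟨n, rfl⟩
  rw [swapFun, dif_neg h1, dif_pos h]
  exact congrArg a (hb h.choose_spec.symm)

lemma swapFun_of_not {x : α} (h1 : ∀ n, x ≠ a n) (h2 : ∀ n, x ≠ b n) :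
    swapFun a b x = x := by
  rw [swapFun, dif_neg (by rintro ⟨n, hn⟩; exact h1 n hn),
    dif_neg (by rintro ⟨n, hn⟩; exact h2 n hn)]

lemma swapFun_involutive (ha : Function.Injective a) (hb : Function.Injective b)
    (hab : ∀ m n, a m ≠ b n) : Function.Involutive (swapFun a b) := by
  intro x
  by_cases h1 : ∃ n, x = a n
  · obtain ⟨n, rfl⟩ := h1
    rw [swapFun_a ha, swapFun_b hb hab]
  · by_cases h2 : ∃ n, x = b n
    · obtain ⟨n, rfl⟩ := h2
      rw [swapFun_b hb hab, swapFun_a ha]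
    · push_neg at h1 h2
      rw [swapFun_of_not h1 h2, swapFun_of_not h1 h2]

lemma swapFun_comm_inj {β : Type*} {j : α → β} (hj : Function.Injective j)
    (ha : Function.Injective a) (hb : Function.Injective b)
    (hab : ∀ m n, a m ≠ b n) (x : α) :
    j (swapFun a b x) = swapFun (j ∘ a) (j ∘ b) (j x) := by
  have hja : Function.Injective (j ∘ a) := hj.comp ha
  have hjb : Function.Injective (j ∘ b) := hj.comp hb
  have hjab : ∀ m n, (j ∘ a) m ≠ (j ∘ b) n := fun m n h => hab m n (hj h)
  by_cases h1 : ∃ n, x = a n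
  · obtain ⟨n, rfl⟩ := h1
    rw [swapFun_a ha]
    exact (swapFun_a (b := j ∘ b) hja n).symm
  · by_cases h2 : ∃ n, x = b n
    · obtain ⟨n, rfl⟩ := h2
      rw [swapFun_b hb hab]
      exact (swapFun_b hjb hjab n).symm
    · push_neg at h1 h2
      rw [swapFun_of_not h1 h2]
      exact (swapFun_of_not (a := j ∘ a) (b := j ∘ b) (fun n h => h1 n (hj h))
        (fun n h => h2 n (hj h))).symm

end SwapAux

/-- From a sequence converging to `z` with all terms `≠ z`, extract an
injective subsequence. -/
lemma extract_injective_subseq {X : Type*} [TopologicalSpace X] [T1Space X]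
    {u : ℕ → X} {z : X} (hu : Tendsto u atTop (𝓝 z)) (hz : ∀ n, u n ≠ z) :
    ∃ φ : ℕ → ℕ, Function.Injective (u ∘ φ) ∧ Tendsto (u ∘ φ) atTop (𝓝 z) := by
  have key : ∀ m : ℕ, ∃ m' : ℕ, m < m' ∧ u m' ∉ u '' Set.Iic m := by
    intro m
    have hF : (u '' Set.Iic m).Finite := (Set.finite_Iic m).image u
    have hzF : z ∉ u '' Set.Iic m := by
      rintro ⟨k, -, hk⟩; exact hz k hk
    have h1 : ∀ᶠ n in atTop, u n ∈ (u '' Set.Iic m)ᶜ :=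
      hu (hF.isClosed.isOpen_compl.mem_nhds hzF)
    obtain ⟨m', hm1, hm2⟩ := (h1.and (eventually_gt_atTop m)).exists
    exact ⟨m', hm2, hm1⟩
  choose f hf1 hf2 using key
  set φ : ℕ → ℕ := fun n => Nat.rec 0 (fun _ p => f p) n with hφ
  have hstep : ∀ n, φ (n + 1) = f (φ n) := fun n => rfl
  have hmono : StrictMono φ := strictMono_nat_of_lt_succ fun n => hf1 (φ n)
  refine ⟨φ, ?_, hu.comp hmono.tendsto_atTop⟩
  have hne : ∀ m n : ℕ, m < n → u (φ m) ≠ u (φ n) := by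
    intro m n hmn h
    obtain ⟨k, rfl⟩ := Nat.exists_eq_succ_of_ne_zero
      (Nat.lt_of_le_of_lt (Nat.zero_le m) hmn).ne'
    have hmk : φ m ≤ φ k := hmono.monotone (Nat.lt_succ_iff.mp hmn)
    exact hf2 (φ k) ⟨φ m, hmk, by rw [← hstep k]; exact h⟩
  intro m n h
  by_contra hne'
  rcases lt_or_gt_of_ne hne' with h' | h'
  · exact hne m n h' h
  · exact hne n m h' h.symm

/-- Any function is continuous at an isolated point. -/
lemma continuousAt_of_isolated {X Y : Type*} [TopologicalSpace X] [TopologicalSpace Y]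
    (f : X → Y) {x : X} (h : IsOpen ({x} : Set X)) : ContinuousAt f x := by
  unfold ContinuousAt
  rw [(isOpen_singleton_iff_nhds_eq_pure x).mp h]
  exact tendsto_pure_nhds f x


/-- Every Fréchet–Urysohn compactification is soft. -/
theorem statement12 (K : Type u) [TopologicalSpace K] [FrechetUrysohnSpace K]
    (hK : IsCompactification K) : IsSoft K := by
  obtain ⟨_, hT2, -⟩ := hK
  haveI := hT2
  intro A B hAB hcl
  obtain ⟨z, hzA, hzB⟩ := hcl
  have hsubA : Subtype.val '' A ⊆ isolatedPoints K := by
    rintro _ ⟨x, -, rfl⟩; exact x.2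
  have hsubB : Subtype.val '' B ⊆ isolatedPoints K := by
    rintro _ ⟨x, -, rfl⟩; exact x.2
  have hD : Disjoint (Subtype.val '' A) (Subtype.val '' B) :=
    Set.disjoint_image_of_injective Subtype.val_injective hAB
  -- z is not isolated
  have hziso : z ∉ isolatedPoints K := by
    intro hz
    have h1 : z ∈ Subtype.val '' A := by
      obtain ⟨w, hw1, hw2⟩ := mem_closure_iff.mp hzA {z} hz rfl
      rwa [← mem_singleton_iff.mp hw1]
    have h2 : z ∈ Subtype.val '' B := by
      obtain ⟨w, hw1, hw2⟩ := mem_closure_iff.mp hzB {z} hz rfl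
      rwa [← mem_singleton_iff.mp hw1]
    exact Set.disjoint_left.mp hD h1 h2
  -- sequences in A and B converging to z
  obtain ⟨uA, huA, huAt⟩ := mem_closure_iff_seq_limit.mp hzA
  obtain ⟨uB, huB, huBt⟩ := mem_closure_iff_seq_limit.mp hzB
  have huAz : ∀ n, uA n ≠ z := fun n h => hziso (h ▸ hsubA (huA n))
  have huBz : ∀ n, uB n ≠ z := fun n h => hziso (h ▸ hsubB (huB n))
  obtain ⟨φA, haInj, hat⟩ := extract_injective_subseq huAt huAz
  obtain ⟨φB, hbInj, hbt⟩ := extract_injective_subseq huBt huBz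
  set a : ℕ → K := uA ∘ φA with ha_def
  set b : ℕ → K := uB ∘ φB with hb_def
  have haA : ∀ n, a n ∈ Subtype.val '' A := fun n => huA (φA n)
  have hbB : ∀ n, b n ∈ Subtype.val '' B := fun n => huB (φB n)
  have haI : ∀ n, a n ∈ isolatedPoints K := fun n => hsubA (haA n)
  have hbI : ∀ n, b n ∈ isolatedPoints K := fun n => hsubB (hbB n)
  have hab : ∀ m n, a m ≠ b n := fun m n h =>
    Set.disjoint_left.mp hD (h ▸ haA m) (hbB n)
  set H : K → K := swapFun a b with hH_def
  have hInv : Function.Involutive H := swapFun_involutive haInj hbInj hab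
  -- tails of the sequences lie in any open neighborhood of z
  have tail : ∀ U : Set K, IsOpen U → z ∈ U → ∃ N : ℕ, ∀ n, N ≤ n → a n ∈ U ∧ b n ∈ U := by
    intro U hU hzU
    have ha1 : ∀ᶠ n in atTop, a n ∈ U := hat.eventually_mem (hU.mem_nhds hzU)
    have hb1 : ∀ᶠ n in atTop, b n ∈ U := hbt.eventually_mem (hU.mem_nhds hzU)
    have h1 : ∀ᶠ n in atTop, a n ∈ U ∧ b n ∈ U := ha1.and hb1
    exact eventually_atTop.mp h1
  have hFfin : ∀ N : ℕ, ((a '' Set.Iio N) ∪ (b '' Set.Iio N)).Finite := fun N =>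
    ((Set.finite_Iio N).image a).union ((Set.finite_Iio N).image b)
  -- continuity of the swap
  have hcont : Continuous H := by
    rw [continuous_iff_continuousAt]
    intro p
    by_cases hpa : ∃ n, p = a n
    · obtain ⟨n, rfl⟩ := hpa; exact continuousAt_of_isolated _ (haI n)
    by_cases hpb : ∃ n, p = b n
    · obtain ⟨n, rfl⟩ := hpb; exact continuousAt_of_isolated _ (hbI n)
    push_neg at hpa hpb
    have hHp : H p = p := swapFun_of_not hpa hpb
    by_cases hpz : p = z
    · -- continuity at z
      subst hpz
      unfold ContinuousAt
      rw [hHp, tendsto_def]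
      intro U hU
      obtain ⟨U', hU'sub, hU'open, hzU'⟩ := mem_nhds_iff.mp hU
      obtain ⟨N, hN⟩ := tail U' hU'open hzU'
      set F := (a '' Set.Iio N) ∪ (b '' Set.Iio N) with hF_def
      have hzF : p ∉ F := by
        rintro (⟨k, -, hk⟩ | ⟨k, -, hk⟩)
        exacts [hpa k hk.symm, hpb k hk.symm]
      have hW : U' \ F ∈ 𝓝 p :=
        (hU'open.sdiff (hFfin N).isClosed).mem_nhds ⟨hzU', hzF⟩
      refine mem_of_superset hW ?_
      rintro w ⟨hw1, hw2⟩
      show H w ∈ U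
      by_cases h1 : ∃ n, w = a n
      · obtain ⟨n, rfl⟩ := h1
        have hn : N ≤ n := by
          by_contra hn
          exact hw2 (Or.inl ⟨n, not_le.mp hn, rfl⟩)
        rw [hH_def, swapFun_a haInj]
        exact hU'sub (hN n hn).2
      by_cases h2 : ∃ n, w = b n
      · obtain ⟨n, rfl⟩ := h2
        have hn : N ≤ n := by
          by_contra hn
          exact hw2 (Or.inr ⟨n, not_le.mp hn, rfl⟩)
        rw [hH_def, swapFun_b hbInj hab]
        exact hU'sub (hN n hn).1
      push_neg at h1 h2
      rw [hH_def, swapFun_of_not h1 h2]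
      exact hU'sub hw1
    · -- p ≠ z : H is locally the identity near p
      obtain ⟨U, V, hUopen, hVopen, hzU, hpV, hUV⟩ := t2_separation (Ne.symm hpz)
      obtain ⟨N, hN⟩ := tail U hUopen hzU
      set F := (a '' Set.Iio N) ∪ (b '' Set.Iio N) with hF_def
      have hpF : p ∉ F := by
        rintro (⟨k, -, hk⟩ | ⟨k, -, hk⟩)
        exacts [hpa k hk.symm, hpb k hk.symm]
      have hW : V \ F ∈ 𝓝 p :=
        (hVopen.sdiff (hFfin N).isClosed).mem_nhds ⟨hpV, hpF⟩
      have hEq : H =ᶠ[𝓝 p] id := by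
        filter_upwards [hW] with w hw
        refine swapFun_of_not (fun n hn => ?_) (fun n hn => ?_)
        · rcases lt_or_ge n N with h | h
          · exact hw.2 (Or.inl ⟨n, h, hn.symm⟩)
          · exact Set.disjoint_right.mp hUV hw.1 (hn ▸ (hN n h).1)
        · rcases lt_or_ge n N with h | h
          · exact hw.2 (Or.inr ⟨n, h, hn.symm⟩)
          · exact Set.disjoint_right.mp hUV hw.1 (hn ▸ (hN n h).2)
      exact continuousAt_id.congr hEq.symm
  -- the homeomorphism
  let hom : K ≃ₜ K :=
    { toEquiv := hInv.toPerm, continuous_toFun := hcont, continuous_invFun := hcont }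
  -- the induced permutation of isolated points
  set aS : ℕ → ↥(isolatedPoints K) := fun n => ⟨a n, haI n⟩ with haS_def
  set bS : ℕ → ↥(isolatedPoints K) := fun n => ⟨b n, hbI n⟩ with hbS_def
  have haSInj : Function.Injective aS := fun m n h => haInj (congrArg Subtype.val h)
  have hbSInj : Function.Injective bS := fun m n h => hbInj (congrArg Subtype.val h)
  have habS : ∀ m n, aS m ≠ bS n := fun m n h => hab m n (congrArg Subtype.val h)
  have hσInv : Function.Involutive (swapFun aS bS) :=
    swapFun_involutive haSInj hbSInj habS
  refine ⟨hσInv.toPerm, ⟨hom, fun w hw => ?_, fun x => ?_⟩, ?_⟩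
  · exact swapFun_of_not (fun n h => hw (h ▸ haI n)) (fun n h => hw (h ▸ hbI n))
  · exact (swapFun_comm_inj Subtype.val_injective haSInj hbSInj habS x).symm
  · apply Set.infinite_of_injective_forall_mem haSInj
    intro n
    constructor
    · obtain ⟨x, hx, hxv⟩ := haA n
      have : aS n = x := Subtype.val_injective hxv.symm
      rwa [this]
    · show swapFun aS bS (aS n) ∈ B
      rw [swapFun_a haSInj]
      obtain ⟨x, hx, hxv⟩ := hbB n
      have : bS n = x := Subtype.val_injective hxv.symm
      rwa [this]
end

section
/- Every separable compactification K of character χ(K) < 𝔭 is soft. -/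
open Set Filter Topology

universe u u₁ u₂ v w

section Helpers

lemma aux_pseudo {ι : Type u} [Nonempty ι] (S : ι → Set ℕ)
    (hcard : Cardinal.mk ι < Cardinal.lift.{u} pCard)
    (hinf : ∀ i, (S i).Infinite)
    (hfip : ∀ t : Finset ι, (⋂ i ∈ t, S i).Infinite) :
    ∃ I : Set ℕ, I.Infinite ∧ ∀ i, (I \ S i).Finite := by
  classical
  by_contra hcon
  push_neg at hcon
  have hmem : pCard ≤ Cardinal.mk ↥(Set.range S) := by
    apply csInf_le'
    refine ⟨Set.range S, ?_, ?_, ?_, rfl⟩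
    · rintro A ⟨i, rfl⟩; exact hinf i
    · intro t ht
      set c : Set ℕ → ι := fun A => if h : A ∈ Set.range S then h.choose else Classical.arbitrary ι with hc
      have hcs : ∀ A ∈ t, S (c A) = A := by
        intro A hA
        have h : A ∈ Set.range S := ht hA
        simp only [hc, dif_pos h]
        exact h.choose_spec
      refine (hfip (t.image c)).mono ?_
      intro x hx
      simp only [Set.mem_iInter] at hx ⊢
      intro A hA
      rw [← hcs A hA]
      exact hx (c A) (Finset.mem_image_of_mem c hA)
    · intro I hI
      obtain ⟨i, hi⟩ := hcon I hI
      exact ⟨S i, Set.mem_range_self i, hi⟩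
  have h1 : Cardinal.lift.{u} pCard ≤ Cardinal.lift.{u} (Cardinal.mk ↥(Set.range S)) :=
    Cardinal.lift_le.mpr hmem
  have h2 : Cardinal.lift.{u} (Cardinal.mk ↥(Set.range S)) ≤ Cardinal.mk ι := by
    have := Cardinal.mk_range_le_lift (f := S)
    rwa [Cardinal.lift_uzero] at this
  exact absurd (h1.trans h2) (not_le.mpr hcard)

lemma aux_trace_infinite {K : Type u} [TopologicalSpace K] [T2Space K]
    {S : Set K} {z : K} (hz : z ∈ closure S) (hzS : z ∉ S)
    {U : Set K} (hU : IsOpen U) (hzU : z ∈ U) : (U ∩ S).Infinite := by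
  intro hfin
  have hcl : IsClosed (U ∩ S) := hfin.isClosed
  have hop : IsOpen (U \ (U ∩ S)) := hU.sdiff hcl
  have hzm : z ∈ U \ (U ∩ S) := ⟨hzU, fun h => hzS h.2⟩
  obtain ⟨x, hx1, hx2⟩ := mem_closure_iff.mp hz _ hop hzm
  exact hx1.2 ⟨hx1.1, hx2⟩

lemma aux_closure_subset {K : Type u} [TopologicalSpace K] [T2Space K] {S : Set K} {z : K}
    (hconv : ∀ V : Set K, IsOpen V → z ∈ V → (S \ V).Finite) :
    closure S ⊆ S ∪ {z} := by
  intro w hw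
  by_contra hwn
  simp only [Set.mem_union, Set.mem_singleton_iff, not_or] at hwn
  obtain ⟨hwS, hwz⟩ := hwn
  obtain ⟨Uw, Uz, hUw, hUz, hwUw, hzUz, hdisj⟩ := t2_separation hwz
  have hfin : (S ∩ Uw).Finite := by
    refine (hconv Uz hUz hzUz).subset ?_
    rintro x ⟨hx1, hx2⟩
    exact ⟨hx1, fun h => hdisj.le_bot ⟨hx2, h⟩⟩
  have hop : IsOpen (Uw \ (S ∩ Uw)) := hUw.sdiff hfin.isClosed
  have hwm : w ∈ Uw \ (S ∩ Uw) := ⟨hwUw, fun h => hwS h.1⟩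
  obtain ⟨x, hx1, hx2⟩ := mem_closure_iff.mp hw _ hop hwm
  exact hx1.2 ⟨hx2, hx1.1⟩

end Helpers


/-- Every separable compactification of character `< 𝔭` is soft. -/
theorem statement13 (K : Type u) [TopologicalSpace K] [TopologicalSpace.SeparableSpace K]
    (hK : IsCompactification K)
    (hchar : spaceChar K < Cardinal.lift.{u} pCard) : IsSoft K := by
  classical
  obtain ⟨hcomp, ht2, hdense⟩ := hK
  haveI := ht2
  intro A B hAB hne
  obtain ⟨z, hzA, hzB⟩ := hne
  -- z is not isolated
  have hziso : z ∉ isolatedPoints K := by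
    intro hz
    obtain ⟨x, hx1, hx2⟩ := mem_closure_iff.mp hzA {z} hz rfl
    obtain ⟨y, hy1, hy2⟩ := mem_closure_iff.mp hzB {z} hz rfl
    rw [Set.mem_singleton_iff] at hx1 hy1
    subst hx1
    obtain ⟨a, haA, ha⟩ := hx2
    obtain ⟨b, hbB, hb⟩ := hy2
    rw [hy1] at hb
    have hab : a = b := Subtype.ext (ha.trans hb.symm)
    exact Set.disjoint_left.mp hAB haA (hab ▸ hbB)
  have hziso' : ∀ C : Set ↥(isolatedPoints K), z ∉ Subtype.val '' C := by
    rintro C ⟨a, _, rfl⟩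
    exact hziso a.2
  -- the isolated points are countable
  have hKcnt : (isolatedPoints K).Countable := by
    obtain ⟨D, hDcnt, hDdense⟩ := TopologicalSpace.exists_countable_dense K
    refine hDcnt.mono ?_
    intro x hx
    obtain ⟨y, hy1, hy2⟩ := hDdense.inter_open_nonempty {x} hx ⟨x, rfl⟩
    rwa [Set.mem_singleton_iff.mp hy1] at hy2
  haveI : Countable ↥(isolatedPoints K) := hKcnt.to_subtype
  obtain ⟨f, hf⟩ := (countable_iff_exists_injective ↥(isolatedPoints K)).mp inferInstance
  -- A and B are infinite
  have hInfOf : ∀ C : Set ↥(isolatedPoints K), z ∈ closure (Subtype.val '' C) → C.Infinite := by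
    intro C hzC hfin
    have hcl : closure (Subtype.val '' C) = Subtype.val '' C :=
      (hfin.image Subtype.val).isClosed.closure_eq
    rw [hcl] at hzC
    exact hziso' C hzC
  have hAinf : A.Infinite := hInfOf A hzA
  have hBinf : B.Infinite := hInfOf B hzB
  -- a small neighborhood base at z
  have hcz : charAt K z < Cardinal.lift.{u} pCard :=
    lt_of_le_of_lt (le_ciSup (Cardinal.bddAbove_range _) z) hchar
  have hset : ∃ 𝓑 : Set (Set K), (∀ U ∈ 𝓑, IsOpen U ∧ z ∈ U) ∧
      (∀ V : Set K, IsOpen V → z ∈ V → ∃ U ∈ 𝓑, U ⊆ V) ∧ Cardinal.mk ↥𝓑 = charAt K z := by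
    have hne' : {c : Cardinal.{u} | ∃ 𝓑 : Set (Set K), (∀ U ∈ 𝓑, IsOpen U ∧ z ∈ U) ∧
        (∀ V : Set K, IsOpen V → z ∈ V → ∃ U ∈ 𝓑, U ⊆ V) ∧ Cardinal.mk ↥𝓑 = c}.Nonempty := by
      refine ⟨_, {U : Set K | IsOpen U ∧ z ∈ U}, fun U hU => hU, ?_, rfl⟩
      intro V hV hzV
      exact ⟨V, ⟨hV, hzV⟩, subset_rfl⟩
    exact csInf_mem hne'
  obtain ⟨𝓑, h𝓑1, h𝓑2, h𝓑3⟩ := hset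
  have h𝓑ne : 𝓑.Nonempty := by
    obtain ⟨U, hU, _⟩ := h𝓑2 Set.univ isOpen_univ (Set.mem_univ z)
    exact ⟨U, hU⟩
  haveI : Nonempty ↥𝓑 := h𝓑ne.to_subtype
  -- key construction of converging subsets
  have key : ∀ C : Set ↥(isolatedPoints K), C.Infinite → z ∈ closure (Subtype.val '' C) →
      ∃ Cstar : Set ↥(isolatedPoints K), Cstar ⊆ C ∧ Cstar.Infinite ∧
        ∀ V : Set K, IsOpen V → z ∈ V → {x : ↥(isolatedPoints K) | x ∈ Cstar ∧ ↑x ∉ V}.Finite := by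
    intro C _ hzC
    set S : ↥𝓑 → Set ℕ := fun U => f '' {x : ↥(isolatedPoints K) | x ∈ C ∧ ↑x ∈ (U : Set K)} with hS
    have hStrace : ∀ U : Set K, IsOpen U → z ∈ U →
        {x : ↥(isolatedPoints K) | x ∈ C ∧ ↑x ∈ U}.Infinite := by
      intro U hU hzU
      have h1 : (U ∩ Subtype.val '' C).Infinite := aux_trace_infinite hzC (hziso' C) hU hzU
      intro hfin
      refine h1 ?_
      refine (hfin.image Subtype.val).subset ?_
      rintro y ⟨hyU, x, hx, rfl⟩
      exact ⟨x, ⟨hx, hyU⟩, rfl⟩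
    have hinf : ∀ i : ↥𝓑, (S i).Infinite := fun U =>
      (hStrace U ((h𝓑1 U U.2).1) ((h𝓑1 U U.2).2)).image hf.injOn
    have hfip : ∀ t : Finset ↥𝓑, (⋂ i ∈ t, S i).Infinite := by
      intro t
      have hUo : IsOpen (⋂ U ∈ t, (U : Set K)) :=
        isOpen_biInter_finset (fun U _ => (h𝓑1 U U.2).1)
      have hUz : z ∈ ⋂ U ∈ t, (U : Set K) := Set.mem_iInter₂.mpr fun U _ => (h𝓑1 U U.2).2
      refine ((hStrace _ hUo hUz).image hf.injOn).mono ?_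
      rintro n ⟨x, ⟨hxC, hxU⟩, rfl⟩
      refine Set.mem_iInter₂.mpr fun U hU => ?_
      exact ⟨x, ⟨hxC, Set.mem_iInter₂.mp hxU U hU⟩, rfl⟩
    obtain ⟨I, hIinf, hIfin⟩ := aux_pseudo S (h𝓑3 ▸ hcz) hinf hfip
    refine ⟨{x | x ∈ C ∧ f x ∈ I}, fun x hx => hx.1, ?_, ?_⟩
    · obtain ⟨U₀⟩ := ‹Nonempty ↥𝓑›
      have h1 : (I ∩ S U₀).Infinite := by
        have h2 := hIinf.diff (hIfin U₀)
        rwa [Set.diff_diff_right_self] at h2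
      intro hfin
      refine h1 ?_
      refine (hfin.image f).subset ?_
      rintro n ⟨hnI, x, ⟨hxC, _⟩, rfl⟩
      exact ⟨x, ⟨hxC, hnI⟩, rfl⟩
    · intro V hV hzV
      obtain ⟨U, hU𝓑, hUV⟩ := h𝓑2 V hV hzV
      refine Set.Finite.of_finite_image ((hIfin ⟨U, hU𝓑⟩).subset ?_) hf.injOn
      rintro n ⟨x, ⟨⟨hxC, hxI⟩, hxV⟩, rfl⟩
      refine ⟨hxI, ?_⟩
      rintro ⟨y, ⟨_, hyU⟩, hfy⟩
      exact hxV (hUV (hf hfy ▸ hyU))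
  obtain ⟨As, hAsA, hAsInf, hAsConv⟩ := key A hAinf hzA
  obtain ⟨Bs, hBsB, hBsInf, hBsConv⟩ := key B hBinf hzB
  have hdisjs : ∀ x, x ∈ As → x ∈ Bs → False := fun x hx hy =>
    Set.disjoint_left.mp hAB (hAsA hx) (hBsB hy)
  haveI : Infinite ↥As := hAsInf.to_subtype
  haveI : Infinite ↥Bs := hBsInf.to_subtype
  obtain ⟨dA⟩ := nonempty_denumerable ↥As
  obtain ⟨dB⟩ := nonempty_denumerable ↥Bs
  haveI := dA; haveI := dB
  let g : ↥As ≃ ↥Bs := (Denumerable.eqv ↥As).trans (Denumerable.eqv ↥Bs).symm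
  -- the permutation at the level of isolated points
  let F : ↥(isolatedPoints K) → ↥(isolatedPoints K) := fun x =>
    if h : x ∈ As then (g ⟨x, h⟩ : ↥(isolatedPoints K))
    else if h : x ∈ Bs then (g.symm ⟨x, h⟩ : ↥(isolatedPoints K)) else x
  have hFA : ∀ (x) (h : x ∈ As), F x = ↑(g ⟨x, h⟩) := fun x h => dif_pos h
  have hFB : ∀ (x) (h : x ∈ Bs), F x = ↑(g.symm ⟨x, h⟩) := by
    intro x h
    have h' : x ∉ As := fun h' => hdisjs x h' h
    show (if h : x ∈ As then _ else _) = _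
    rw [dif_neg h', dif_pos h]
  have hFo : ∀ x, x ∉ As → x ∉ Bs → F x = x := by
    intro x h1 h2
    show (if h : x ∈ As then _ else _) = _
    rw [dif_neg h1, dif_neg h2]
  have hFinv : Function.Involutive F := by
    intro x
    by_cases h : x ∈ As
    · rw [hFA x h, hFB _ (g ⟨x, h⟩).2]
      simp
    · by_cases h2 : x ∈ Bs
      · rw [hFB x h2, hFA _ (g.symm ⟨x, h2⟩).2]
        simp
      · rw [hFo x h h2, hFo x h h2]
  have hFAmem : ∀ x ∈ As, F x ∈ Bs := by
    intro x hx; rw [hFA x hx]; exact (g ⟨x, hx⟩).2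
  have hFBmem : ∀ x ∈ Bs, F x ∈ As := by
    intro x hx; rw [hFB x hx]; exact (g.symm ⟨x, hx⟩).2
  -- the map at the level of K
  let H : K → K := fun w =>
    if h : w ∈ isolatedPoints K then (↑(F ⟨w, h⟩) : K) else w
  have hHiso : ∀ (w) (h : w ∈ isolatedPoints K), H w = ↑(F ⟨w, h⟩) := fun w h => dif_pos h
  have hHn : ∀ w, w ∉ isolatedPoints K → H w = w := fun w h => dif_neg h
  have hHcoe : ∀ x : ↥(isolatedPoints K), H ↑x = ↑(F x) := fun x => hHiso ↑x x.2
  have hHinv : Function.Involutive H := by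
    intro w
    by_cases h : w ∈ isolatedPoints K
    · rw [hHiso w h, hHcoe (F ⟨w, h⟩), hFinv ⟨w, h⟩]
    · rw [hHn w h, hHn w h]
  -- the moved set
  set Mv : Set K := Subtype.val '' As ∪ Subtype.val '' Bs with hMv
  have hMviso : ∀ w ∈ Mv, w ∈ isolatedPoints K := by
    rintro w (⟨x, _, rfl⟩ | ⟨x, _, rfl⟩) <;> exact x.2
  have hHfix : ∀ w, w ∉ Mv → H w = w := by
    intro w hw
    by_cases h : w ∈ isolatedPoints K
    · rw [hHiso w h]
      have h1 : (⟨w, h⟩ : ↥(isolatedPoints K)) ∉ As := fun h' => hw (Set.mem_union_left _ ⟨_, h', rfl⟩)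
      have h2 : (⟨w, h⟩ : ↥(isolatedPoints K)) ∉ Bs := fun h' => hw (Set.mem_union_right _ ⟨_, h', rfl⟩)
      rw [hFo _ h1 h2]
    · exact hHn w h
  -- convergence at the level of K
  have hconvOf : ∀ (Cs : Set ↥(isolatedPoints K)),
      (∀ V : Set K, IsOpen V → z ∈ V → {x : ↥(isolatedPoints K) | x ∈ Cs ∧ ↑x ∉ V}.Finite) →
      ∀ V : Set K, IsOpen V → z ∈ V → (Subtype.val '' Cs \ V).Finite := by
    intro Cs hCs V hV hzV
    refine ((hCs V hV hzV).image Subtype.val).subset ?_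
    rintro w ⟨⟨x, hx, rfl⟩, hwV⟩
    exact ⟨x, ⟨hx, hwV⟩, rfl⟩
  have hclM : closure Mv ⊆ Mv ∪ {z} := by
    rw [hMv, closure_union]
    rintro w (hw | hw)
    · rcases aux_closure_subset (hconvOf As hAsConv) hw with h | h
      · exact Or.inl (Set.mem_union_left _ h)
      · exact Or.inr h
    · rcases aux_closure_subset (hconvOf Bs hBsConv) hw with h | h
      · exact Or.inl (Set.mem_union_right _ h)
      · exact Or.inr h
  -- finiteness of the "bad" set near z
  have hTfin : ∀ V : Set K, IsOpen V → z ∈ V → {w | w ∈ Mv ∧ H w ∉ V}.Finite := by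
    intro V hV hzV
    have hAfin : {x : ↥(isolatedPoints K) | x ∈ As ∧ (↑(F x) : K) ∉ V}.Finite := by
      refine (((hBsConv V hV hzV).preimage hFinv.injective.injOn).subset ?_)
      rintro x ⟨hx, hxV⟩
      exact ⟨hFAmem x hx, hxV⟩
    have hBfin : {x : ↥(isolatedPoints K) | x ∈ Bs ∧ (↑(F x) : K) ∉ V}.Finite := by
      refine (((hAsConv V hV hzV).preimage hFinv.injective.injOn).subset ?_)
      rintro x ⟨hx, hxV⟩
      exact ⟨hFBmem x hx, hxV⟩
    refine ((hAfin.image Subtype.val).union (hBfin.image Subtype.val)).subset ?_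
    rintro w ⟨hwM, hwV⟩
    rcases hwM with ⟨x, hx, rfl⟩ | ⟨x, hx, rfl⟩
    · exact Or.inl ⟨x, ⟨hx, by rwa [← hHcoe x]⟩, rfl⟩
    · exact Or.inr ⟨x, ⟨hx, by rwa [← hHcoe x]⟩, rfl⟩
  -- continuity of H
  have hcont : Continuous H := by
    rw [continuous_iff_continuousAt]
    intro y
    by_cases hy : y ∈ isolatedPoints K
    · have hpure : 𝓝 y = pure y := (isOpen_singleton_iff_nhds_eq_pure y).mp hy
      rw [ContinuousAt, hpure]
      exact tendsto_pure_nhds H y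
    · have hHy : H y = y := hHn y hy
      rw [ContinuousAt, hHy, Filter.tendsto_def]
      intro V hV
      obtain ⟨V', hV'sub, hV'open, hyV'⟩ := mem_nhds_iff.mp hV
      by_cases hyz : y = z
      · subst hyz
        have hfin := hTfin V' hV'open hyV'
        have hW : IsOpen (V' \ {w | w ∈ Mv ∧ H w ∉ V'}) := hV'open.sdiff hfin.isClosed
        have hyW : y ∈ V' \ {w | w ∈ Mv ∧ H w ∉ V'} :=
          ⟨hyV', fun h => hy (hMviso _ h.1)⟩
        refine Filter.mem_of_superset (hW.mem_nhds hyW) ?_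
        rintro w ⟨hwV', hwT⟩
        by_cases hwM : w ∈ Mv
        · by_contra hnot
          exact hwT ⟨hwM, fun h => hnot (Set.mem_preimage.mpr (hV'sub h))⟩
        · rw [Set.mem_preimage, hHfix w hwM]
          exact hV'sub hwV'
      · have hyM : y ∉ closure Mv := by
          intro h
          rcases hclM h with hM | hz
          · exact hy (hMviso _ hM)
          · exact hyz (by simpa using hz)
        have hW : IsOpen (V' \ closure Mv) := hV'open.sdiff isClosed_closure
        refine Filter.mem_of_superset (hW.mem_nhds ⟨hyV', hyM⟩) ?_
        rintro w ⟨hwV', hwM⟩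
        rw [Set.mem_preimage, hHfix w (fun h => hwM (subset_closure h))]
        exact hV'sub hwV'
  -- assemble the homeomorphism and the permutation
  let hom : K ≃ₜ K :=
    { toEquiv := Function.Involutive.toPerm H hHinv
      continuous_toFun := hcont
      continuous_invFun := hcont }
  refine ⟨Function.Involutive.toPerm F hFinv, ⟨hom, ?_, ?_⟩, ?_⟩
  · intro w hw
    exact hHn w hw
  · intro x
    exact hHcoe x
  · refine hAsInf.mono ?_
    intro x hx
    exact ⟨hAsA hx, hBsB (by simpa [Function.Involutive.coe_toPerm] using hFAmem x hx)⟩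
end
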